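/- arXiv:1603.07401 — 7 statements merged into one kernel-verified Lean document; each statement's English description precedes it below -/
import Mathlib

section
/- Let S be a finite nonempty family of closed intervals in ℝ, each with nonempty interior, and suppose the 'overlap graph' of S (two intervals adjacent iff their intersection has nonempty interior) is connected. Then the union of all intervals in S is itself a closed interval with nonempty interior. -/
/-- A finite nonempty family of closed intervals (each with nonempty interior)
whose overlap graph (adjacency: intersection has nonempty interior) is connected
has a union that is a closed interval with nonempty interior. -/
theorem union_of_connected_overlap_family (S : Finset (ℝ × ℝ)) (hne : S.Nonempty)
    (hint : ∀ p ∈ S, p.1 < p.2)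
    (hconn : ∀ p ∈ S, ∀ q ∈ S, Relation.ReflTransGen
      (fun x y : ℝ × ℝ => x ∈ S ∧ y ∈ S ∧
        (interior (Set.Icc x.1 x.2 ∩ Set.Icc y.1 y.2)).Nonempty) p q) :
    ∃ l u : ℝ, l < u ∧ (⋃ p ∈ S, Set.Icc p.1 p.2) = Set.Icc l u := by
  set U := ⋃ p ∈ S, Set.Icc p.1 p.2 with hU
  have hconn' : IsConnected U := by
    apply IsConnected.biUnion_of_reflTransGen (t := (S : Set (ℝ × ℝ)))
      (s := fun p => Set.Icc p.1 p.2) (by exact_mod_cast hne)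
    · intro p hp
      exact isConnected_Icc (le_of_lt (hint p hp))
    · intro p hp q hq
      refine Relation.ReflTransGen.mono ?_ _ _ (hconn p hp q hq)
      rintro x y ⟨hx, hy, z, hz⟩
      exact ⟨⟨z, interior_subset hz⟩, hx⟩
  have hcomp : IsCompact U :=
    S.isCompact_biUnion (fun p _ => isCompact_Icc)
  have heq := eq_Icc_of_connected_compact hconn' hcomp
  refine ⟨sInf U, sSup U, ?_, heq⟩
  obtain ⟨p, hp⟩ := hne
  have h1 : p.1 ∈ U := Set.mem_biUnion hp (Set.left_mem_Icc.2 (hint p hp).le)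
  have h2 : p.2 ∈ U := Set.mem_biUnion hp (Set.right_mem_Icc.2 (hint p hp).le)
  rw [heq] at h1 h2
  exact lt_of_le_of_lt h1.1 (lt_of_lt_of_le (hint p hp) h2.2)
end

section
/- Let S be a finite family of closed intervals in ℝ, each with nonempty interior, and let ~ be the transitive closure of the overlap relation (I overlaps J iff I ∩ J has nonempty interior). Then the unions of distinct equivalence classes of ~ have intersections with empty interior; in fact, the open interiors of the unions of two distinct equivalence classes are disjoint. -/
/-- The overlap relation on a finite family `S` of closed intervals:
two members overlap iff their intersection has nonempty interior. -/
def overlaps (S : Finset (ℝ × ℝ)) (x y : ℝ × ℝ) : Prop :=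
  x ∈ S ∧ y ∈ S ∧ (interior (Set.Icc x.1 x.2 ∩ Set.Icc y.1 y.2)).Nonempty

/-- Unions of distinct equivalence classes of the transitive closure of the
overlap relation have disjoint interiors (hence intersections with empty interior). -/
theorem bars_disjoint (S : Finset (ℝ × ℝ)) (hint : ∀ p ∈ S, p.1 < p.2)
    (p q : ℝ × ℝ) (hp : p ∈ S) (hq : q ∈ S)
    (hnrel : ¬ Relation.EqvGen (overlaps S) p q) :
    Disjoint
      (interior (⋃ r ∈ {r | r ∈ S ∧ Relation.EqvGen (overlaps S) p r}, Set.Icc r.1 r.2))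
      (interior (⋃ r ∈ {r | r ∈ S ∧ Relation.EqvGen (overlaps S) q r}, Set.Icc r.1 r.2)) := by
  rw [Set.disjoint_left]
  intro x hx1 hx2
  apply hnrel
  -- a neighborhood of x inside both unions
  obtain ⟨ε1, hε1, hb1⟩ := Metric.isOpen_iff.1 isOpen_interior x hx1
  obtain ⟨ε2, hε2, hb2⟩ := Metric.isOpen_iff.1 isOpen_interior x hx2
  set ε := min ε1 ε2 with hε
  have hεpos : 0 < ε := lt_min hε1 hε2
  have hsub1 : Set.Ioo (x - ε) (x + ε) ⊆
      ⋃ r ∈ {r | r ∈ S ∧ Relation.EqvGen (overlaps S) p r}, Set.Icc r.1 r.2 := by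
    intro y hy
    have : y ∈ Metric.ball x ε1 := by
      rw [Real.ball_eq_Ioo]
      exact ⟨lt_of_le_of_lt (by have h1 := min_le_left ε1 ε2; have h2 := min_le_right ε1 ε2; linarith [hε.ge, hε.le]) hy.1,
        lt_of_lt_of_le hy.2 (by have h1 := min_le_left ε1 ε2; have h2 := min_le_right ε1 ε2; linarith [hε.ge, hε.le])⟩
    exact interior_subset (hb1 this)
  have hsub2 : Set.Ioo (x - ε) (x + ε) ⊆
      ⋃ r ∈ {r | r ∈ S ∧ Relation.EqvGen (overlaps S) q r}, Set.Icc r.1 r.2 := by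
    intro y hy
    have : y ∈ Metric.ball x ε2 := by
      rw [Real.ball_eq_Ioo]
      exact ⟨lt_of_le_of_lt (by have h1 := min_le_left ε1 ε2; have h2 := min_le_right ε1 ε2; linarith [hε.ge, hε.le]) hy.1,
        lt_of_lt_of_le hy.2 (by have h1 := min_le_left ε1 ε2; have h2 := min_le_right ε1 ε2; linarith [hε.ge, hε.le])⟩
    exact interior_subset (hb2 this)
  -- pick a point in the interval avoiding the finitely many endpoints
  have hinf : (Set.Ioo (x - ε) (x + ε)).Infinite :=
    Set.Ioo_infinite (by linarith)
  set E : Finset ℝ := S.image Prod.fst ∪ S.image Prod.snd with hE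
  obtain ⟨y, hy, hyE⟩ := hinf.exists_notMem_finset E
  have hy1 := hsub1 hy
  have hy2 := hsub2 hy
  simp only [Set.mem_iUnion, Set.mem_setOf_eq, exists_prop] at hy1 hy2
  obtain ⟨r, ⟨hrS, hpr⟩, hyr⟩ := hy1
  obtain ⟨s, ⟨hsS, hqs⟩, hys⟩ := hy2
  -- y is not an endpoint of r or s
  have hne : ∀ t ∈ S, y ≠ t.1 ∧ y ≠ t.2 := by
    intro t ht
    constructor <;> intro h <;> apply hyE <;> rw [hE]
    · exact Finset.mem_union_left _ (Finset.mem_image.2 ⟨t, ht, h.symm⟩)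
    · exact Finset.mem_union_right _ (Finset.mem_image.2 ⟨t, ht, h.symm⟩)
  have hyr' : y ∈ Set.Ioo r.1 r.2 :=
    ⟨lt_of_le_of_ne hyr.1 (Ne.symm (hne r hrS).1), lt_of_le_of_ne hyr.2 (hne r hrS).2⟩
  have hys' : y ∈ Set.Ioo s.1 s.2 :=
    ⟨lt_of_le_of_ne hys.1 (Ne.symm (hne s hsS).1), lt_of_le_of_ne hys.2 (hne s hsS).2⟩
  have hov : overlaps S r s := by
    refine ⟨hrS, hsS, ⟨y, ?_⟩⟩
    rw [interior_inter, interior_Icc, interior_Icc]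
    exact ⟨hyr', hys'⟩
  exact (hpr.trans _ _ _ (Relation.EqvGen.rel _ _ hov)).trans _ _ _ hqs.symm
end

section
/- Let D be the closed unit disk in ℝ² and let q₁, q₂, q₃, q₄ be four distinct points in this cyclic order on the boundary circle ∂D. Then any two continuous paths γ₁ : [0,1] → D from q₁ to q₃ and γ₂ : [0,1] → D from q₂ to q₄ have intersecting images: there exist s, t ∈ [0,1] with γ₁(s) = γ₂(t). -/
open Complex Real Set

lemma exists_continuous_arg (g : ℝ × ℝ → ℂ)
    (hg : ContinuousOn g (Set.Icc 0 1 ×ˢ Set.Icc 0 1))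
    (h0 : ∀ x ∈ (Set.Icc 0 1 ×ˢ Set.Icc 0 1 : Set (ℝ × ℝ)), g x ≠ 0) :
    ∃ α : ℝ × ℝ → ℝ, ContinuousOn α (Set.Icc 0 1 ×ˢ Set.Icc 0 1) ∧
      ∀ x ∈ (Set.Icc 0 1 ×ˢ Set.Icc 0 1 : Set (ℝ × ℝ)),
        Complex.exp (α x * Complex.I) = g x / ‖g x‖ := by
  set K : Set (ℝ × ℝ) := Set.Icc 0 1 ×ˢ Set.Icc 0 1 with hKdef
  have hKc : IsCompact K := isCompact_Icc.prod isCompact_Icc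
  have h0K : (0 : ℝ × ℝ) ∈ K := by
    constructor <;> exact ⟨le_refl _, zero_le_one⟩
  have hstar : ∀ c ∈ Set.Icc (0:ℝ) 1, ∀ x ∈ K, c • x ∈ K := by
    rintro c ⟨hc0, hc1⟩ ⟨s, t⟩ ⟨⟨hs0, hs1⟩, ⟨ht0, ht1⟩⟩
    constructor <;> constructor <;> simp only [Prod.smul_fst, Prod.smul_snd, smul_eq_mul] <;>
      nlinarith
  -- minimum of ‖g‖ on K
  obtain ⟨x₀, hx₀K, hmin⟩ := hKc.exists_isMinOn ⟨0, h0K⟩ hg.norm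
  set m : ℝ := ‖g x₀‖ with hmdef
  have hm : 0 < m := norm_pos_iff.mpr (h0 x₀ hx₀K)
  have hmle : ∀ x ∈ K, m ≤ ‖g x‖ := fun x hx => hmin hx
  -- uniform continuity
  have huc := hKc.uniformContinuousOn_of_continuous hg
  rw [Metric.uniformContinuousOn_iff] at huc
  obtain ⟨δ, hδ, hδ'⟩ := huc m hm
  obtain ⟨n, hn⟩ := exists_nat_one_div_lt hδ
  set N : ℕ := n + 1 with hNdef
  have hN0 : (0:ℝ) < N := by positivity
  -- the subdivision points
  set p : ℕ → (ℝ × ℝ) → ℝ × ℝ := fun k x => ((k : ℝ) / N) • x with hpdef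
  have hpK : ∀ k, k ≤ N → ∀ x ∈ K, p k x ∈ K := by
    intro k hk x hx
    refine hstar _ ⟨by positivity, ?_⟩ x hx
    rw [div_le_one hN0]; exact_mod_cast hk
  have hp0 : ∀ x, p 0 x = 0 := by intro x; simp [hpdef]
  have hpN : ∀ x, p N x = x := by
    intro x; simp only [hpdef]; rw [div_self (ne_of_gt hN0), one_smul]
  have hnormK : ∀ x ∈ K, ‖x‖ ≤ 1 := by
    rintro ⟨s, t⟩ ⟨⟨hs0, hs1⟩, ⟨ht0, ht1⟩⟩
    rw [Prod.norm_def]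
    apply max_le <;> rw [Real.norm_eq_abs, abs_le] <;> constructor <;> linarith
  have hclose : ∀ x ∈ K, ∀ k : ℕ, k < N → dist (g (p (k+1) x)) (g (p k x)) < m := by
    intro x hx k hk
    apply hδ' _ (hpK _ hk x hx) _ (hpK _ (by omega) x hx)
    have : p (k+1) x - p k x = ((1:ℝ)/N) • x := by
      rw [hpdef]; simp only [← sub_smul]; congr 1; push_cast; ring
    rw [dist_eq_norm, this, norm_smul]
    have h1 : ‖(1:ℝ)/N‖ = 1/N := by
      rw [Real.norm_eq_abs, abs_of_pos]; positivity
    rw [h1]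
    calc 1/(N:ℝ) * ‖x‖ ≤ 1/N * 1 := by
          apply mul_le_mul_of_nonneg_left (hnormK x hx); positivity
      _ = 1/(n+1 : ℝ) := by rw [hNdef]; push_cast; ring
      _ < δ := hn
  -- ratios have positive real part
  have hre1 : ∀ z : ℂ, ‖z - 1‖ < 1 → 0 < z.re := by
    intro z hz
    have h1 : |(z - 1).re| ≤ ‖z - 1‖ := Complex.abs_re_le_norm _
    have h2 : (z - 1).re = z.re - 1 := by simp
    rw [h2] at h1
    have := abs_lt.mp (lt_of_le_of_lt h1 hz)
    linarith [this.1]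
  have hrpos : ∀ x ∈ K, ∀ k : ℕ, k < N →
      0 < (g (p (k+1) x) / g (p k x)).re := by
    intro x hx k hk
    have ha : g (p k x) ≠ 0 := h0 _ (hpK _ (by omega) x hx)
    apply hre1
    have : g (p (k+1) x) / g (p k x) - 1 = (g (p (k+1) x) - g (p k x)) / g (p k x) := by
      field_simp
    rw [this, norm_div, div_lt_one (norm_pos_iff.mpr ha)]
    calc ‖g (p (k+1) x) - g (p k x)‖ = dist (g (p (k+1) x)) (g (p k x)) := (dist_eq_norm _ _).symm
      _ < m := hclose x hx k hk
      _ ≤ ‖g (p k x)‖ := hmle _ (hpK _ (by omega) x hx)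
  have hrne : ∀ x ∈ K, ∀ k : ℕ, k < N → g (p (k+1) x) / g (p k x) ≠ 0 := by
    intro x hx k hk
    exact div_ne_zero (h0 _ (hpK _ (by omega) x hx)) (h0 _ (hpK _ (by omega) x hx))
  -- the lift
  set α : ℝ × ℝ → ℝ := fun x =>
    Complex.arg (g 0) + ∑ k ∈ Finset.range N, Complex.arg (g (p (k+1) x) / g (p k x)) with hαdef
  have hcont : ∀ j : ℕ, j ≤ N → ContinuousOn (fun x => g (p j x)) K := by
    intro j hj
    exact hg.comp ((continuous_id.const_smul ((j:ℝ)/N)).continuousOn)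
      (fun x hx => hpK j hj x hx)
  have hαcont : ContinuousOn α K := by
    apply ContinuousOn.add continuousOn_const
    apply continuousOn_finset_sum
    intro k hk
    rw [Finset.mem_range] at hk
    intro x hx
    have hrat : ContinuousWithinAt (fun x => g (p (k+1) x) / g (p k x)) K x :=
      ((hcont (k+1) (by omega)) x hx).div ((hcont k (by omega)) x hx)
        (h0 _ (hpK _ (by omega) x hx))
    have harg : ContinuousAt Complex.arg ((fun x => g (p (k+1) x) / g (p k x)) x) :=
      Complex.continuousAt_arg (Complex.mem_slitPlane_iff.mpr (Or.inl (hrpos x hx k hk)))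
    exact Filter.Tendsto.comp harg hrat
  refine ⟨α, hαcont, ?_⟩
  intro x hx
  -- exp identity by induction
  have main : ∀ j : ℕ, j ≤ N →
      Complex.exp ((Complex.arg (g 0) +
        ∑ k ∈ Finset.range j, Complex.arg (g (p (k+1) x) / g (p k x)) : ℝ) * Complex.I)
        = g (p j x) / ‖g (p j x)‖ := by
    intro j
    induction j with
    | zero =>
      intro _
      simp only [Finset.range_zero, Finset.sum_empty, add_zero, hp0]
      have h00 : g 0 ≠ 0 := h0 0 h0K
      rw [eq_div_iff (by exact_mod_cast (norm_ne_zero_iff.mpr h00))]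
      rw [mul_comm]
      exact Complex.norm_mul_exp_arg_mul_I (g 0)
    | succ j ih =>
      intro hj
      have hj' : j ≤ N := by omega
      have hjN : j < N := by omega
      have ha : g (p j x) ≠ 0 := h0 _ (hpK _ hj' x hx)
      have hb : g (p (j+1) x) ≠ 0 := h0 _ (hpK _ hj x hx)
      have haa : (‖g (p j x)‖ : ℂ) ≠ 0 := by
        exact_mod_cast norm_ne_zero_iff.mpr ha
      have hbb : (‖g (p (j+1) x)‖ : ℂ) ≠ 0 := by
        exact_mod_cast norm_ne_zero_iff.mpr hb
      rw [Finset.sum_range_succ]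
      rw [show ((Complex.arg (g 0) + (∑ k ∈ Finset.range j,
            Complex.arg (g (p (k+1) x) / g (p k x)) + Complex.arg (g (p (j+1) x) / g (p j x))) : ℝ) : ℂ)
          = ((Complex.arg (g 0) + ∑ k ∈ Finset.range j,
            Complex.arg (g (p (k+1) x) / g (p k x)) : ℝ) : ℂ)
            + ((Complex.arg (g (p (j+1) x) / g (p j x)) : ℝ) : ℂ) from by push_cast; ring]
      rw [add_mul, Complex.exp_add, ih hj']
      have hr : g (p (j+1) x) / g (p j x) ≠ 0 := hrne x hx j hjN
      have hexp_r : Complex.exp ((Complex.arg (g (p (j+1) x) / g (p j x)) : ℝ) * Complex.I)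
          = (g (p (j+1) x) / g (p j x)) / ‖g (p (j+1) x) / g (p j x)‖ := by
        rw [eq_div_iff (by exact_mod_cast norm_ne_zero_iff.mpr hr), mul_comm]
        exact Complex.norm_mul_exp_arg_mul_I _
      rw [hexp_r, norm_div]
      push_cast
      field_simp
  have := main N (le_refl N)
  rw [hpN] at this
  exact this

lemma aux_int_zero {w : ℝ} {k : ℤ} (hw : |w| < Real.pi) (h : |w + 2*Real.pi*k| < Real.pi) :
    k = 0 := by
  have hπ := Real.pi_pos
  have h1 : |2*Real.pi*(k:ℝ)| ≤ |w + 2*Real.pi*k| + |w| := by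
    calc |2*Real.pi*(k:ℝ)| = |(w + 2*Real.pi*k) - w| := by ring_nf
      _ ≤ |w + 2*Real.pi*k| + |w| := abs_sub _ _
  have h2 : |2*Real.pi*(k:ℝ)| < 2*Real.pi := by linarith
  rw [abs_mul, abs_of_pos (by linarith : (0:ℝ) < 2*Real.pi)] at h2
  have h3 : |(k:ℝ)| < 1 := by nlinarith [abs_nonneg ((k:ℝ))]
  have h4 : |k| < 1 := by exact_mod_cast (by push_cast; exact h3 : ((|k| : ℤ) : ℝ) < 1)
  exact Int.abs_lt_one_iff.mp h4

lemma aux_edge_var {β : ℝ → ℝ} (hβ : ContinuousOn β (Set.Icc 0 1))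
    (h : ∀ s ∈ Set.Icc (0:ℝ) 1, Real.cos (β s) < 0) : |β 1 - β 0| < Real.pi := by
  have hπ := Real.pi_pos
  have h0 : (0:ℝ) ∈ Set.Icc (0:ℝ) 1 := ⟨le_refl _, zero_le_one⟩
  set k : ℤ := ⌊(β 0 - Real.pi/2)/(2*Real.pi)⌋ with hkdef
  set c : ℝ := 2*Real.pi*k with hcdef
  have hfl1 : (k:ℝ) ≤ (β 0 - Real.pi/2)/(2*Real.pi) := Int.floor_le _
  have hfl2 : (β 0 - Real.pi/2)/(2*Real.pi) < k + 1 := Int.lt_floor_add_one _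
  have h2π : (0:ℝ) < 2*Real.pi := by linarith
  have hfl1' : (k:ℝ)*(2*Real.pi) ≤ β 0 - Real.pi/2 := (le_div_iff₀ h2π).mp hfl1
  have hfl2' : β 0 - Real.pi/2 < ((k:ℝ)+1)*(2*Real.pi) := (div_lt_iff₀ h2π).mp hfl2
  have ha1 : c + Real.pi/2 ≤ β 0 := by rw [hcdef]; linarith
  have ha2 : β 0 < c + Real.pi/2 + 2*Real.pi := by rw [hcdef]; linarith
  have hcosc : ∀ y : ℝ, Real.cos (y + c) = Real.cos y := by
    intro y; rw [hcdef]; rw [show y + 2*Real.pi*(k:ℝ) = y + (k:ℝ)*(2*Real.pi) by ring]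
    exact Real.cos_add_int_mul_two_pi y k
  -- cos vanishes at c + π/2 and c + 3π/2
  have hcos1 : Real.cos (c + Real.pi/2) = 0 := by
    rw [show c + Real.pi/2 = Real.pi/2 + c by ring, hcosc, Real.cos_pi_div_two]
  have hcos2 : Real.cos (c + 3*Real.pi/2) = 0 := by
    rw [show c + 3*Real.pi/2 = (Real.pi/2 + Real.pi) + c by ring, hcosc, Real.cos_add_pi,
      Real.cos_pi_div_two, neg_zero]
  -- β 0 strictly between c + π/2 and c + 3π/2
  have hb1 : c + Real.pi/2 < β 0 := by
    rcases lt_or_eq_of_le ha1 with h' | h'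
    · exact h'
    · exfalso; have := h 0 h0; rw [← h', hcos1] at this; exact lt_irrefl _ this
  have hb2 : β 0 < c + 3*Real.pi/2 := by
    by_contra hcon
    push_neg at hcon
    -- then β 0 - 2π ∈ [-π/2, π/2), so cos (β 0) ≥ 0
    have : Real.cos (β 0) = Real.cos (β 0 - c - 2*Real.pi) := by
      rw [show β 0 - c - 2*Real.pi = β 0 - (k+1 : ℤ)*(2*Real.pi) by push_cast [hcdef]; ring]
      exact (Real.cos_sub_int_mul_two_pi _ _).symm
    have hge : 0 ≤ Real.cos (β 0) := by
      rw [this]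
      apply Real.cos_nonneg_of_mem_Icc
      rw [Set.mem_Icc]
      constructor <;> nlinarith
    exact absurd (h 0 h0) (not_lt.mpr hge)
  -- all values stay in the open interval
  have hall : ∀ s ∈ Set.Icc (0:ℝ) 1, c + Real.pi/2 < β s ∧ β s < c + 3*Real.pi/2 := by
    intro s hs
    constructor
    · by_contra hcon
      push_neg at hcon
      have hmem : c + Real.pi/2 ∈ Set.Icc (β s) (β 0) := ⟨hcon, le_of_lt hb1⟩
      have := intermediate_value_Icc' hs.1 (hβ.mono (Set.Icc_subset_Icc (le_refl _) hs.2)) hmem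
      obtain ⟨s', hs', hval⟩ := this
      have := h s' (Set.Icc_subset_Icc (le_refl _) hs.2 hs')
      rw [hval, hcos1] at this; exact lt_irrefl _ this
    · by_contra hcon
      push_neg at hcon
      have hmem : c + 3*Real.pi/2 ∈ Set.Icc (β 0) (β s) := ⟨le_of_lt hb2, hcon⟩
      have := intermediate_value_Icc hs.1 (hβ.mono (Set.Icc_subset_Icc (le_refl _) hs.2)) hmem
      obtain ⟨s', hs', hval⟩ := this
      have := h s' (Set.Icc_subset_Icc (le_refl _) hs.2 hs')
      rw [hval, hcos2] at this; exact lt_irrefl _ this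
  obtain ⟨hx1, hx2⟩ := hall 1 ⟨zero_le_one, le_refl _⟩
  rw [abs_lt]; constructor <;> linarith

lemma aux_corner {a b A : ℝ} (hba : b < a) (h2 : a < b + 2*Real.pi)
    (hA : Complex.exp ((A:ℂ) * Complex.I) =
      (Complex.exp ((a:ℂ) * Complex.I) - Complex.exp ((b:ℂ) * Complex.I)) /
        ‖Complex.exp ((a:ℂ) * Complex.I) - Complex.exp ((b:ℂ) * Complex.I)‖) :
    ∃ k : ℤ, A = (a+b)/2 + Real.pi/2 + 2*Real.pi*k := by
  have hπ := Real.pi_pos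
  have hs : 0 < Real.sin ((a-b)/2) :=
    Real.sin_pos_of_pos_of_lt_pi (by linarith) (by linarith)
  set φ : ℝ := (a+b)/2 + Real.pi/2 with hφdef
  have hid : Complex.exp ((a:ℂ) * Complex.I) - Complex.exp ((b:ℂ) * Complex.I)
      = ((2 * Real.sin ((a-b)/2) : ℝ) : ℂ) * Complex.exp ((φ:ℂ) * Complex.I) := by
    apply Complex.ext
    · simp only [Complex.sub_re, Complex.exp_ofReal_mul_I_re, Complex.mul_re,
        Complex.ofReal_re, Complex.ofReal_im, Complex.exp_ofReal_mul_I_im]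
      rw [hφdef, Real.cos_add, Real.cos_pi_div_two, Real.sin_pi_div_two, Real.cos_sub_cos]
      ring
    · simp only [Complex.sub_im, Complex.exp_ofReal_mul_I_im, Complex.mul_im,
        Complex.ofReal_re, Complex.ofReal_im, Complex.exp_ofReal_mul_I_re]
      rw [hφdef, Real.sin_add, Real.cos_pi_div_two, Real.sin_pi_div_two, Real.sin_sub_sin]
      ring
  have habs : ‖Complex.exp ((a:ℂ) * Complex.I) - Complex.exp ((b:ℂ) * Complex.I)‖
      = 2 * Real.sin ((a-b)/2) := by
    rw [hid, norm_mul, Complex.norm_real, Real.norm_eq_abs, Complex.norm_exp_ofReal_mul_I,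
      abs_of_pos (by linarith), mul_one]
  rw [habs, hid] at hA
  have hne : ((2 * Real.sin ((a-b)/2) : ℝ) : ℂ) ≠ 0 := by
    exact_mod_cast ne_of_gt (by linarith : (0:ℝ) < 2 * Real.sin ((a-b)/2))
  rw [mul_div_assoc, show ((2 * Real.sin ((a-b)/2) : ℝ) : ℂ) * (Complex.exp ((φ:ℂ) * Complex.I) /
      ((2 * Real.sin ((a-b)/2) : ℝ) : ℂ)) = Complex.exp ((φ:ℂ) * Complex.I) from by
    rw [mul_comm, div_mul_cancel₀ _ hne]] at hA
  obtain ⟨n, hn⟩ := Complex.exp_eq_exp_iff_exists_int.mp hA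
  refine ⟨n, ?_⟩
  have h' : (A:ℂ) * Complex.I = ((φ + (n:ℝ)*(2*Real.pi) : ℝ) : ℂ) * Complex.I := by
    rw [hn]; push_cast; ring
  have h'' : (A:ℂ) = ((φ + (n:ℝ)*(2*Real.pi) : ℝ) : ℂ) :=
    mul_right_cancel₀ Complex.I_ne_zero h'
  have hAr : A = φ + (n:ℝ)*(2*Real.pi) := by exact_mod_cast h''
  rw [hAr, hφdef]; ring

lemma aux_corner' {a b A : ℝ} (hab : a < b) (h2 : b < a + 2*Real.pi)
    (hA : Complex.exp ((A:ℂ) * Complex.I) =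
      (Complex.exp ((a:ℂ) * Complex.I) - Complex.exp ((b:ℂ) * Complex.I)) /
        ‖Complex.exp ((a:ℂ) * Complex.I) - Complex.exp ((b:ℂ) * Complex.I)‖) :
    ∃ k : ℤ, A = (a+b)/2 - Real.pi/2 + 2*Real.pi*k := by
  have hA' : Complex.exp (((A + Real.pi : ℝ) : ℂ) * Complex.I) =
      (Complex.exp ((b:ℂ) * Complex.I) - Complex.exp ((a:ℂ) * Complex.I)) /
        ‖Complex.exp ((b:ℂ) * Complex.I) - Complex.exp ((a:ℂ) * Complex.I)‖ := by
    push_cast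
    rw [add_mul, Complex.exp_add, hA, Complex.exp_pi_mul_I]
    rw [norm_sub_rev]
    field_simp
    ring
  obtain ⟨k, hk⟩ := aux_corner hab h2 hA'
  exact ⟨k, by linarith⟩

lemma aux_ball_lt {d : EuclideanSpace ℝ (Fin 2)}
    (hd : d ∈ Metric.closedBall (0 : EuclideanSpace ℝ (Fin 2)) 1) {θ : ℝ}
    (hne : ¬(d 0 = Real.cos θ ∧ d 1 = Real.sin θ)) :
    d 0 * Real.cos θ + d 1 * Real.sin θ < 1 := by
  have h1 : ‖d‖ ≤ 1 := by simpa [Metric.mem_closedBall, dist_zero_right] using hd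
  have h3 : ‖d‖^2 = d 0^2 + d 1^2 := by
    rw [EuclideanSpace.norm_eq, Real.sq_sqrt (by positivity)]
    simp [Fin.sum_univ_two, Real.norm_eq_abs, sq_abs]
  have hn : d 0^2 + d 1^2 ≤ 1 := by nlinarith [norm_nonneg d]
  have hpos : 0 < (d 0 - Real.cos θ)^2 + (d 1 - Real.sin θ)^2 := by
    rcases not_and_or.mp hne with h | h
    · have h' : d 0 - Real.cos θ ≠ 0 := sub_ne_zero.mpr h
      nlinarith [sq_nonneg (d 1 - Real.sin θ), (sq_pos_of_ne_zero h' : 0 < (d 0 - Real.cos θ)^2)]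
    · have h' : d 1 - Real.sin θ ≠ 0 := sub_ne_zero.mpr h
      nlinarith [sq_nonneg (d 0 - Real.cos θ), (sq_pos_of_ne_zero h' : 0 < (d 1 - Real.sin θ)^2)]
  nlinarith [Real.sin_sq_add_cos_sq θ]
/-- Two continuous paths inside the closed unit disk connecting interleaved
boundary points must intersect. The four points `q 0, q 1, q 2, q 3` lie on the
boundary circle in this cyclic order (encoded by angles
`θ 0 < θ 1 < θ 2 < θ 3 < θ 0 + 2π`); `γ₁` runs from `q 0` to `q 2` and `γ₂`
from `q 1` to `q 3`, both staying in the disk. -/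
theorem paths_in_disk_interleaved_intersect
    (θ : Fin 4 → ℝ)
    (h01 : θ 0 < θ 1) (h12 : θ 1 < θ 2) (h23 : θ 2 < θ 3)
    (h30 : θ 3 < θ 0 + 2 * Real.pi)
    (q : Fin 4 → EuclideanSpace ℝ (Fin 2))
    (hq : ∀ i, q i 0 = Real.cos (θ i) ∧ q i 1 = Real.sin (θ i))
    (γ₁ γ₂ : ℝ → EuclideanSpace ℝ (Fin 2))
    (hc₁ : ContinuousOn γ₁ (Set.Icc 0 1)) (hc₂ : ContinuousOn γ₂ (Set.Icc 0 1))
    (hm₁ : Set.MapsTo γ₁ (Set.Icc 0 1) (Metric.closedBall 0 1))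
    (hm₂ : Set.MapsTo γ₂ (Set.Icc 0 1) (Metric.closedBall 0 1))
    (h₁0 : γ₁ 0 = q 0) (h₁1 : γ₁ 1 = q 2)
    (h₂0 : γ₂ 0 = q 1) (h₂1 : γ₂ 1 = q 3) :
    ∃ s ∈ Set.Icc (0:ℝ) 1, ∃ t ∈ Set.Icc (0:ℝ) 1, γ₁ s = γ₂ t := by
  by_contra hcon
  push_neg at hcon
  have hπ := Real.pi_pos
  set K : Set (ℝ × ℝ) := Set.Icc 0 1 ×ˢ Set.Icc 0 1 with hKdef
  have hmem01 : (0:ℝ) ∈ Set.Icc (0:ℝ) 1 := ⟨le_refl _, zero_le_one⟩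
  have hmem11 : (1:ℝ) ∈ Set.Icc (0:ℝ) 1 := ⟨zero_le_one, le_refl _⟩
  set g : ℝ × ℝ → ℂ := fun p =>
    ((γ₁ p.1 0 - γ₂ p.2 0 : ℝ) : ℂ) + ((γ₁ p.1 1 - γ₂ p.2 1 : ℝ) : ℂ) * Complex.I with hgdef
  have hgre : ∀ p : ℝ × ℝ, (g p).re = γ₁ p.1 0 - γ₂ p.2 0 := by intro p; simp [hgdef]
  have hgim : ∀ p : ℝ × ℝ, (g p).im = γ₁ p.1 1 - γ₂ p.2 1 := by intro p; simp [hgdef]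
  have ec : ∀ i : Fin 2, ContinuousOn (fun p : ℝ × ℝ => γ₁ p.1 i - γ₂ p.2 i) K := by
    intro i
    have c1 : ContinuousOn (fun p : ℝ × ℝ => γ₁ p.1 i) K :=
      (EuclideanSpace.proj i).continuous.comp_continuousOn
        (hc₁.comp continuous_fst.continuousOn (fun p hp => hp.1))
    have c2 : ContinuousOn (fun p : ℝ × ℝ => γ₂ p.2 i) K :=
      (EuclideanSpace.proj i).continuous.comp_continuousOn
        (hc₂.comp continuous_snd.continuousOn (fun p hp => hp.2))
    exact c1.sub c2
  have hgc : ContinuousOn g K := by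
    apply ContinuousOn.add
    · exact Complex.continuous_ofReal.comp_continuousOn (ec 0)
    · exact (Complex.continuous_ofReal.comp_continuousOn (ec 1)).mul continuousOn_const
  have h0 : ∀ x ∈ K, g x ≠ 0 := by
    rintro ⟨s, t⟩ ⟨hs, ht⟩ h
    apply hcon s hs t ht
    have hre := congrArg Complex.re h
    have him := congrArg Complex.im h
    rw [hgre] at hre
    rw [hgim] at him
    simp only [Complex.zero_re, Complex.zero_im] at hre him
    ext i
    fin_cases i
    · exact sub_eq_zero.mp hre
    · exact sub_eq_zero.mp him
  obtain ⟨α, hαc, hαe⟩ := exists_continuous_arg g hgc h0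
  have habs_pos : ∀ x ∈ K, 0 < ‖g x‖ := fun x hx => norm_pos_iff.mpr (h0 x hx)
  have hpolar : ∀ x ∈ K, ‖g x‖ * Real.cos (α x) = (g x).re ∧
      ‖g x‖ * Real.sin (α x) = (g x).im := by
    intro x hx
    have h1 : g x = (‖g x‖ : ℂ) * Complex.exp ((α x : ℝ) * Complex.I) := by
      rw [hαe x hx, mul_comm, div_mul_cancel₀]
      exact_mod_cast ne_of_gt (habs_pos x hx)
    constructor
    · have := congrArg Complex.re h1
      simp only [Complex.mul_re, Complex.ofReal_re, Complex.ofReal_im,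
        Complex.exp_ofReal_mul_I_re, Complex.exp_ofReal_mul_I_im, zero_mul, sub_zero] at this
      linarith [this]
    · have := congrArg Complex.im h1
      simp only [Complex.mul_im, Complex.ofReal_re, Complex.ofReal_im,
        Complex.exp_ofReal_mul_I_re, Complex.exp_ofReal_mul_I_im, zero_mul, add_zero] at this
      linarith [this]
  -- the four edges
  -- bottom edge: γ₁ s vs q 1
  have hbot : ∀ s ∈ Set.Icc (0:ℝ) 1, Real.cos (α (s, 0) - θ 1) < 0 := by
    intro s hs
    have hsK : ((s, 0) : ℝ × ℝ) ∈ K := ⟨hs, hmem01⟩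
    have hne : ¬(γ₁ s 0 = Real.cos (θ 1) ∧ γ₁ s 1 = Real.sin (θ 1)) := by
      rintro ⟨e0, e1⟩
      apply hcon s hs 0 hmem01
      ext i; fin_cases i
      · rw [h₂0]
        show γ₁ s 0 = q 1 0
        rw [(hq 1).1]; exact e0
      · rw [h₂0]
        show γ₁ s 1 = q 1 1
        rw [(hq 1).2]; exact e1
    have hlt := aux_ball_lt (hm₁ hs) hne
    obtain ⟨e1, e2⟩ := hpolar _ hsK
    rw [hgre] at e1
    rw [hgim] at e2
    simp only [h₂0] at e1 e2
    rw [(hq 1).1] at e1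
    rw [(hq 1).2] at e2
    have key : ‖g (s, 0)‖ * Real.cos (α (s, 0) - θ 1) =
        γ₁ s 0 * Real.cos (θ 1) + γ₁ s 1 * Real.sin (θ 1) -
          (Real.sin (θ 1)^2 + Real.cos (θ 1)^2) := by
      rw [Real.cos_sub]
      linear_combination Real.cos (θ 1) * e1 + Real.sin (θ 1) * e2
    rw [Real.sin_sq_add_cos_sq] at key
    nlinarith [habs_pos _ hsK]
  -- top edge: γ₁ s vs q 3
  have htop : ∀ s ∈ Set.Icc (0:ℝ) 1, Real.cos (α (s, 1) - θ 3) < 0 := by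
    intro s hs
    have hsK : ((s, 1) : ℝ × ℝ) ∈ K := ⟨hs, hmem11⟩
    have hne : ¬(γ₁ s 0 = Real.cos (θ 3) ∧ γ₁ s 1 = Real.sin (θ 3)) := by
      rintro ⟨e0, e1⟩
      apply hcon s hs 1 hmem11
      ext i; fin_cases i
      · rw [h₂1]
        show γ₁ s 0 = q 3 0
        rw [(hq 3).1]; exact e0
      · rw [h₂1]
        show γ₁ s 1 = q 3 1
        rw [(hq 3).2]; exact e1
    have hlt := aux_ball_lt (hm₁ hs) hne
    obtain ⟨e1, e2⟩ := hpolar _ hsK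
    rw [hgre] at e1
    rw [hgim] at e2
    simp only [h₂1] at e1 e2
    rw [(hq 3).1] at e1
    rw [(hq 3).2] at e2
    have key : ‖g (s, 1)‖ * Real.cos (α (s, 1) - θ 3) =
        γ₁ s 0 * Real.cos (θ 3) + γ₁ s 1 * Real.sin (θ 3) -
          (Real.sin (θ 3)^2 + Real.cos (θ 3)^2) := by
      rw [Real.cos_sub]
      linear_combination Real.cos (θ 3) * e1 + Real.sin (θ 3) * e2
    rw [Real.sin_sq_add_cos_sq] at key
    nlinarith [habs_pos _ hsK]
  -- right edge: q 2 vs γ₂ t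
  have hright : ∀ t ∈ Set.Icc (0:ℝ) 1, 0 < Real.cos (α (1, t) - θ 2) := by
    intro t ht
    have htK : ((1, t) : ℝ × ℝ) ∈ K := ⟨hmem11, ht⟩
    have hne : ¬(γ₂ t 0 = Real.cos (θ 2) ∧ γ₂ t 1 = Real.sin (θ 2)) := by
      rintro ⟨e0, e1⟩
      apply hcon 1 hmem11 t ht
      ext i; fin_cases i
      · rw [h₁1]
        show q 2 0 = γ₂ t 0
        rw [(hq 2).1]; exact e0.symm
      · rw [h₁1]
        show q 2 1 = γ₂ t 1
        rw [(hq 2).2]; exact e1.symm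
    have hlt := aux_ball_lt (hm₂ ht) hne
    obtain ⟨e1, e2⟩ := hpolar _ htK
    rw [hgre] at e1
    rw [hgim] at e2
    simp only [h₁1] at e1 e2
    rw [(hq 2).1] at e1
    rw [(hq 2).2] at e2
    have key : ‖g (1, t)‖ * Real.cos (α (1, t) - θ 2) =
        (Real.sin (θ 2)^2 + Real.cos (θ 2)^2) -
          (γ₂ t 0 * Real.cos (θ 2) + γ₂ t 1 * Real.sin (θ 2)) := by
      rw [Real.cos_sub]
      linear_combination Real.cos (θ 2) * e1 + Real.sin (θ 2) * e2
    rw [Real.sin_sq_add_cos_sq] at key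
    nlinarith [habs_pos _ htK]
  -- left edge: q 0 vs γ₂ t
  have hleft : ∀ t ∈ Set.Icc (0:ℝ) 1, 0 < Real.cos (α (0, t) - θ 0) := by
    intro t ht
    have htK : ((0, t) : ℝ × ℝ) ∈ K := ⟨hmem01, ht⟩
    have hne : ¬(γ₂ t 0 = Real.cos (θ 0) ∧ γ₂ t 1 = Real.sin (θ 0)) := by
      rintro ⟨e0, e1⟩
      apply hcon 0 hmem01 t ht
      ext i; fin_cases i
      · rw [h₁0]
        show q 0 0 = γ₂ t 0
        rw [(hq 0).1]; exact e0.symm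
      · rw [h₁0]
        show q 0 1 = γ₂ t 1
        rw [(hq 0).2]; exact e1.symm
    have hlt := aux_ball_lt (hm₂ ht) hne
    obtain ⟨e1, e2⟩ := hpolar _ htK
    rw [hgre] at e1
    rw [hgim] at e2
    simp only [h₁0] at e1 e2
    rw [(hq 0).1] at e1
    rw [(hq 0).2] at e2
    have key : ‖g (0, t)‖ * Real.cos (α (0, t) - θ 0) =
        (Real.sin (θ 0)^2 + Real.cos (θ 0)^2) -
          (γ₂ t 0 * Real.cos (θ 0) + γ₂ t 1 * Real.sin (θ 0)) := by
      rw [Real.cos_sub]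
      linear_combination Real.cos (θ 0) * e1 + Real.sin (θ 0) * e2
    rw [Real.sin_sq_add_cos_sq] at key
    nlinarith [habs_pos _ htK]
  -- edge variation bounds
  have hBA : |α (1, 0) - α (0, 0)| < Real.pi := by
    have hco : ContinuousOn (fun s : ℝ => α (s, 0) - θ 1) (Set.Icc 0 1) := by
      apply ContinuousOn.sub _ continuousOn_const
      exact hαc.comp (continuous_id.prodMk continuous_const).continuousOn
        (fun s hs => ⟨hs, hmem01⟩)
    have := aux_edge_var hco (fun s hs => hbot s hs)
    have heq : (α (1, 0) - θ 1) - (α (0, 0) - θ 1) = α (1, 0) - α (0, 0) := by ring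
    rwa [heq] at this
  have hCD : |α (1, 1) - α (0, 1)| < Real.pi := by
    have hco : ContinuousOn (fun s : ℝ => α (s, 1) - θ 3) (Set.Icc 0 1) := by
      apply ContinuousOn.sub _ continuousOn_const
      exact hαc.comp (continuous_id.prodMk continuous_const).continuousOn
        (fun s hs => ⟨hs, hmem11⟩)
    have := aux_edge_var hco (fun s hs => htop s hs)
    have heq : (α (1, 1) - θ 3) - (α (0, 1) - θ 3) = α (1, 1) - α (0, 1) := by ring
    rwa [heq] at this
  have hCB : |α (1, 1) - α (1, 0)| < Real.pi := by
    have hco : ContinuousOn (fun t : ℝ => α (1, t) - θ 2 + Real.pi) (Set.Icc 0 1) := by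
      apply ContinuousOn.add _ continuousOn_const
      apply ContinuousOn.sub _ continuousOn_const
      exact hαc.comp (continuous_const.prodMk continuous_id).continuousOn
        (fun t ht => ⟨hmem11, ht⟩)
    have hcond : ∀ t ∈ Set.Icc (0:ℝ) 1, Real.cos (α (1, t) - θ 2 + Real.pi) < 0 := by
      intro t ht
      rw [Real.cos_add_pi]
      linarith [hright t ht]
    have := aux_edge_var hco hcond
    have heq : (α (1, 1) - θ 2 + Real.pi) - (α (1, 0) - θ 2 + Real.pi) =
        α (1, 1) - α (1, 0) := by ring
    rwa [heq] at this
  have hDA : |α (0, 1) - α (0, 0)| < Real.pi := by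
    have hco : ContinuousOn (fun t : ℝ => α (0, t) - θ 0 + Real.pi) (Set.Icc 0 1) := by
      apply ContinuousOn.add _ continuousOn_const
      apply ContinuousOn.sub _ continuousOn_const
      exact hαc.comp (continuous_const.prodMk continuous_id).continuousOn
        (fun t ht => ⟨hmem01, ht⟩)
    have hcond : ∀ t ∈ Set.Icc (0:ℝ) 1, Real.cos (α (0, t) - θ 0 + Real.pi) < 0 := by
      intro t ht
      rw [Real.cos_add_pi]
      linarith [hleft t ht]
    have := aux_edge_var hco hcond
    have heq : (α (0, 1) - θ 0 + Real.pi) - (α (0, 0) - θ 0 + Real.pi) =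
        α (0, 1) - α (0, 0) := by ring
    rwa [heq] at this
  -- corner values of g
  have hgcorner : ∀ (u v : ℝ) (i j : Fin 4), γ₁ u = q i → γ₂ v = q j →
      g (u, v) = Complex.exp ((θ i : ℝ) * Complex.I) - Complex.exp ((θ j : ℝ) * Complex.I) := by
    intro u v i j hu hv
    apply Complex.ext
    · rw [hgre]
      simp only [Complex.sub_re, Complex.exp_ofReal_mul_I_re]
      rw [hu, hv, (hq i).1, (hq j).1]
    · rw [hgim]
      simp only [Complex.sub_im, Complex.exp_ofReal_mul_I_im]
      rw [hu, hv, (hq i).2, (hq j).2]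
  have hK00 : ((0, 0) : ℝ × ℝ) ∈ K := ⟨hmem01, hmem01⟩
  have hK10 : ((1, 0) : ℝ × ℝ) ∈ K := ⟨hmem11, hmem01⟩
  have hK11 : ((1, 1) : ℝ × ℝ) ∈ K := ⟨hmem11, hmem11⟩
  have hK01 : ((0, 1) : ℝ × ℝ) ∈ K := ⟨hmem01, hmem11⟩
  have hcA : ∃ k : ℤ, α (0, 0) = (θ 0 + θ 1)/2 - Real.pi/2 + 2*Real.pi*k := by
    apply aux_corner' h01 (by linarith)
    rw [← hgcorner 0 0 0 1 h₁0 h₂0]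
    exact hαe _ hK00
  have hcB : ∃ k : ℤ, α (1, 0) = (θ 2 + θ 1)/2 + Real.pi/2 + 2*Real.pi*k := by
    apply aux_corner h12 (by linarith)
    rw [← hgcorner 1 0 2 1 h₁1 h₂0]
    exact hαe _ hK10
  have hcC : ∃ k : ℤ, α (1, 1) = (θ 2 + θ 3)/2 - Real.pi/2 + 2*Real.pi*k := by
    apply aux_corner' h23 (by linarith)
    rw [← hgcorner 1 1 2 3 h₁1 h₂1]
    exact hαe _ hK11
  have hcD : ∃ k : ℤ, α (0, 1) = (θ 0 + θ 3)/2 - Real.pi/2 + 2*Real.pi*k := by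
    apply aux_corner' (by linarith) h30
    rw [← hgcorner 0 1 0 3 h₁0 h₂1]
    exact hαe _ hK01
  obtain ⟨ka, hka⟩ := hcA
  obtain ⟨kb, hkb⟩ := hcB
  obtain ⟨kc, hkc⟩ := hcC
  obtain ⟨kd, hkd⟩ := hcD
  -- determine the integers
  have w1 : |(θ 2 - θ 0)/2 - Real.pi| < Real.pi := by
    rw [abs_lt]; constructor <;> linarith
  have w2 : |(θ 3 - θ 1)/2 - Real.pi| < Real.pi := by
    rw [abs_lt]; constructor <;> linarith
  have w3 : |(θ 2 - θ 0)/2| < Real.pi := by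
    rw [abs_lt]; constructor <;> linarith
  have w4 : |(θ 3 - θ 1)/2| < Real.pi := by
    rw [abs_lt]; constructor <;> linarith
  have i1 : kb - ka + 1 = 0 := by
    apply aux_int_zero w1
    have e : (θ 2 - θ 0)/2 - Real.pi + 2*Real.pi*((kb - ka + 1 : ℤ) : ℝ) =
        α (1, 0) - α (0, 0) := by push_cast; rw [hka, hkb]; ring
    rwa [e]
  have i2 : kc - kb = 0 := by
    apply aux_int_zero w2
    have e : (θ 3 - θ 1)/2 - Real.pi + 2*Real.pi*((kc - kb : ℤ) : ℝ) =
        α (1, 1) - α (1, 0) := by push_cast; rw [hkb, hkc]; ring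
    rwa [e]
  have i3 : kc - kd = 0 := by
    apply aux_int_zero w3
    have e : (θ 2 - θ 0)/2 + 2*Real.pi*((kc - kd : ℤ) : ℝ) =
        α (1, 1) - α (0, 1) := by push_cast; rw [hkc, hkd]; ring
    rwa [e]
  have i4 : kd - ka = 0 := by
    apply aux_int_zero w4
    have e : (θ 3 - θ 1)/2 + 2*Real.pi*((kd - ka : ℤ) : ℝ) =
        α (0, 1) - α (0, 0) := by push_cast; rw [hka, hkd]; ring
    rwa [e]
  omega
end

section
/- Let a, b, c, d ∈ ℝ² be points such that the open segments (a, b) and (c, d) intersect in exactly one point x, and x is not an endpoint of either segment, and the segments are not collinear. Then there exists ε > 0 such that for all points a', b', c', d' with ‖a'−a‖ < ε, ‖b'−b‖ < ε, ‖c'−c‖ < ε, ‖d'−d‖ < ε, the closed segments [a', b'] and [c', d'] still intersect. -/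
private noncomputable abbrev E2 := EuclideanSpace ℝ (Fin 2)

private noncomputable def fD (p : E2 × E2 × E2 × E2) : ℝ :=
  (p.2.1 0 - p.1 0) * (p.2.2.2 1 - p.2.2.1 1) - (p.2.1 1 - p.1 1) * (p.2.2.2 0 - p.2.2.1 0)

private noncomputable def fNs (p : E2 × E2 × E2 × E2) : ℝ :=
  (p.2.2.1 0 - p.1 0) * (p.2.2.2 1 - p.2.2.1 1) - (p.2.2.1 1 - p.1 1) * (p.2.2.2 0 - p.2.2.1 0)

private noncomputable def fNt (p : E2 × E2 × E2 × E2) : ℝ :=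
  (p.2.1 1 - p.1 1) * (p.2.2.1 0 - p.1 0) - (p.2.1 0 - p.1 0) * (p.2.2.1 1 - p.1 1)

private lemma coord_cont : ∀ i : Fin 2,
    (Continuous fun p : E2 × E2 × E2 × E2 => p.1 i) ∧
    (Continuous fun p : E2 × E2 × E2 × E2 => p.2.1 i) ∧
    (Continuous fun p : E2 × E2 × E2 × E2 => p.2.2.1 i) ∧
    (Continuous fun p : E2 × E2 × E2 × E2 => p.2.2.2 i) := by
  intro i
  refine ⟨?_, ?_, ?_, ?_⟩
  · exact (continuous_apply i).comp ((PiLp.continuous_ofLp (p := 2) (β := fun _ : Fin 2 => ℝ)).comp continuous_fst)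
  · exact (continuous_apply i).comp ((PiLp.continuous_ofLp (p := 2) (β := fun _ : Fin 2 => ℝ)).comp (continuous_fst.comp continuous_snd))
  · exact (continuous_apply i).comp ((PiLp.continuous_ofLp (p := 2) (β := fun _ : Fin 2 => ℝ)).comp ((continuous_fst.comp continuous_snd).comp continuous_snd))
  · exact (continuous_apply i).comp ((PiLp.continuous_ofLp (p := 2) (β := fun _ : Fin 2 => ℝ)).comp ((continuous_snd.comp continuous_snd).comp continuous_snd))

private lemma contD : Continuous fD := by
  unfold fD
  exact ((((coord_cont 0).2.1).sub ((coord_cont 0).1)).mul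
      (((coord_cont 1).2.2.2).sub ((coord_cont 1).2.2.1))).sub
    ((((coord_cont 1).2.1).sub ((coord_cont 1).1)).mul
      (((coord_cont 0).2.2.2).sub ((coord_cont 0).2.2.1)))

private lemma contNs : Continuous fNs := by
  unfold fNs
  exact ((((coord_cont 0).2.2.1).sub ((coord_cont 0).1)).mul
      (((coord_cont 1).2.2.2).sub ((coord_cont 1).2.2.1))).sub
    ((((coord_cont 1).2.2.1).sub ((coord_cont 1).1)).mul
      (((coord_cont 0).2.2.2).sub ((coord_cont 0).2.2.1)))

private lemma contNt : Continuous fNt := by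
  unfold fNt
  exact ((((coord_cont 1).2.1).sub ((coord_cont 1).1)).mul
      (((coord_cont 0).2.2.1).sub ((coord_cont 0).1))).sub
    ((((coord_cont 0).2.1).sub ((coord_cont 0).1)).mul
      (((coord_cont 1).2.2.1).sub ((coord_cont 1).1)))

private lemma cramer_st (u0 u1 v0 v1 w0 w1 s t : ℝ) (hD : u0*v1 - u1*v0 ≠ 0)
    (h0 : s*u0 - t*v0 = w0) (h1 : s*u1 - t*v1 = w1) :
    s = (w0*v1 - w1*v0)/(u0*v1 - u1*v0) ∧ t = (u1*w0 - u0*w1)/(u0*v1 - u1*v0) := by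
  constructor
  · rw [eq_div_iff hD]
    linear_combination v1*h0 - v0*h1
  · field_simp
    linear_combination u1*h0 - u0*h1

/-- Stability of a proper transversal segment crossing under small perturbations
of the endpoints: if the open segments `(a,b)` and `(c,d)` meet in exactly one
point `x`, which is not an endpoint of either segment, and the four points are
not collinear, then for sufficiently small perturbations of `a, b, c, d` the
closed segments still intersect. -/
theorem crossing_stable_under_perturbation
    (a b c d x : EuclideanSpace ℝ (Fin 2))
    (hx : openSegment ℝ a b ∩ openSegment ℝ c d = {x})
    (hxa : x ≠ a) (hxb : x ≠ b) (hxc : x ≠ c) (hxd : x ≠ d)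
    (hcol : ¬ Collinear ℝ ({a, b, c, d} : Set (EuclideanSpace ℝ (Fin 2)))) :
    ∃ ε > 0, ∀ a' b' c' d' : EuclideanSpace ℝ (Fin 2),
      ‖a' - a‖ < ε → ‖b' - b‖ < ε → ‖c' - c‖ < ε → ‖d' - d‖ < ε →
      (segment ℝ a' b' ∩ segment ℝ c' d').Nonempty := by
  classical
  have hxmem : x ∈ openSegment ℝ a b ∩ openSegment ℝ c d := by rw [hx]; rfl
  obtain ⟨hx1, hx2⟩ := hxmem
  rw [openSegment_eq_image] at hx1 hx2
  obtain ⟨s, hs, hxs⟩ := hx1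
  obtain ⟨t, ht, hxt⟩ := hx2
  have hsc : ∀ i : Fin 2, (1-s)*a i + s*b i = x i := by
    intro i; have := congrArg (fun v => v i) hxs; simpa using this
  have htc : ∀ i : Fin 2, (1-t)*c i + t*d i = x i := by
    intro i; have := congrArg (fun v => v i) hxt; simpa using this
  have hkey : ∀ i : Fin 2, s * (b i - a i) - t * (d i - c i) = c i - a i := by
    intro i; linear_combination hsc i - htc i
  -- `b ≠ a` coordinatewise
  have hba : ¬ (b 0 - a 0 = 0 ∧ b 1 - a 1 = 0) := by
    rintro ⟨h0, h1⟩
    apply hxa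
    ext i
    fin_cases i
    · show x 0 = a 0
      linear_combination (-(hsc 0)) + s * h0
    · show x 1 = a 1
      linear_combination (-(hsc 1)) + s * h1
  -- vector identities
  have hxa' : x - a = s • (b - a) := by rw [← hxs]; module
  have hxc' : x - c = t • (d - c) := by rw [← hxt]; module
  -- transversality: determinant nonzero
  have hD : (b 0 - a 0) * (d 1 - c 1) - (b 1 - a 1) * (d 0 - c 0) ≠ 0 := by
    intro hdet
    apply hcol
    rw [collinear_iff_exists_forall_eq_smul_vadd]
    have hlam : ∃ lam : ℝ, d - c = lam • (b - a) := by
      rcases not_and_or.mp hba with h0 | h1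
      · refine ⟨(d 0 - c 0)/(b 0 - a 0), ?_⟩
        ext i
        fin_cases i
        · show d 0 - c 0 = ((d 0 - c 0)/(b 0 - a 0)) • (b - a) 0
          simp only [PiLp.sub_apply, smul_eq_mul]
          rw [div_mul_cancel₀ _ h0]
        · show d 1 - c 1 = ((d 0 - c 0)/(b 0 - a 0)) • (b - a) 1
          simp only [PiLp.sub_apply, smul_eq_mul]
          field_simp
          linear_combination hdet
      · refine ⟨(d 1 - c 1)/(b 1 - a 1), ?_⟩
        ext i
        fin_cases i
        · show d 0 - c 0 = ((d 1 - c 1)/(b 1 - a 1)) • (b - a) 0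
          simp only [PiLp.sub_apply, smul_eq_mul]
          field_simp
          linear_combination -hdet
        · show d 1 - c 1 = ((d 1 - c 1)/(b 1 - a 1)) • (b - a) 1
          simp only [PiLp.sub_apply, smul_eq_mul]
          rw [div_mul_cancel₀ _ h1]
    obtain ⟨lam, hlam⟩ := hlam
    refine ⟨x, b - a, ?_⟩
    intro p hp
    simp only [Set.mem_insert_iff, Set.mem_singleton_iff] at hp
    rcases hp with rfl | rfl | rfl | rfl
    · exact ⟨-s, by rw [vadd_eq_add, neg_smul, ← hxa']; abel⟩
    · exact ⟨1 - s, by rw [vadd_eq_add, sub_smul, one_smul, ← hxa']; abel⟩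
    · exact ⟨-(t * lam), by rw [vadd_eq_add, neg_smul, mul_smul, ← hlam, ← hxc']; abel⟩
    · exact ⟨(1 - t) * lam, by rw [vadd_eq_add, mul_smul, ← hlam, sub_smul, one_smul, ← hxc']; abel⟩
  -- Cramer's rule: identify s and t
  obtain ⟨hsEq, htEq⟩ := cramer_st (b 0 - a 0) (b 1 - a 1) (d 0 - c 0) (d 1 - c 1)
    (c 0 - a 0) (c 1 - a 1) s t hD (hkey 0) (hkey 1)
  -- the reference point in the product space
  have hfDq : fD (a, b, c, d) ≠ 0 := hD
  have hfSq : fNs (a, b, c, d) / fD (a, b, c, d) = s := hsEq.symm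
  have hfTq : fNt (a, b, c, d) / fD (a, b, c, d) = t := htEq.symm
  -- the open condition
  have hU : IsOpen {r : ℝ × ℝ × ℝ | r.1 ≠ 0 ∧ r.2.1 ∈ Set.Ioo (0:ℝ) 1 ∧ r.2.2 ∈ Set.Ioo (0:ℝ) 1} := by
    exact (isOpen_compl_singleton.preimage continuous_fst).inter
      ((isOpen_Ioo.preimage (continuous_fst.comp continuous_snd)).inter
        (isOpen_Ioo.preimage (continuous_snd.comp continuous_snd)))
  have hfc : ContinuousAt (fun p => (fD p, fNs p / fD p, fNt p / fD p)) (a, b, c, d) :=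
    (contD.continuousAt).prodMk
      (((contNs.continuousAt).div (contD.continuousAt) hfDq).prodMk
        (((contNt.continuousAt).div (contD.continuousAt) hfDq)))
  have hmem : (fD (a, b, c, d), fNs (a, b, c, d) / fD (a, b, c, d),
      fNt (a, b, c, d) / fD (a, b, c, d)) ∈
      {r : ℝ × ℝ × ℝ | r.1 ≠ 0 ∧ r.2.1 ∈ Set.Ioo (0:ℝ) 1 ∧ r.2.2 ∈ Set.Ioo (0:ℝ) 1} := by
    refine ⟨hfDq, ?_, ?_⟩
    · rw [hfSq]; exact hs
    · rw [hfTq]; exact ht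
  have hnh := hfc.preimage_mem_nhds (hU.mem_nhds hmem)
  rw [Metric.mem_nhds_iff] at hnh
  obtain ⟨ε, hε, hball⟩ := hnh
  refine ⟨ε, hε, ?_⟩
  intro a' b' c' d' ha' hb' hc' hd'
  have hp' : ((a', b', c', d') : E2 × E2 × E2 × E2) ∈ Metric.ball (a, b, c, d) ε := by
    rw [Metric.mem_ball, Prod.dist_eq, Prod.dist_eq, Prod.dist_eq]
    simp only [max_lt_iff, dist_eq_norm]
    exact ⟨ha', hb', hc', hd'⟩
  have hU' := hball hp'
  simp only [Set.mem_preimage, Set.mem_setOf_eq] at hU'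
  obtain ⟨hD', hS', hT'⟩ := hU'
  refine ⟨(1 - fNs (a', b', c', d') / fD (a', b', c', d')) • a' +
      (fNs (a', b', c', d') / fD (a', b', c', d')) • b',
    ⟨1 - fNs (a', b', c', d') / fD (a', b', c', d'),
      fNs (a', b', c', d') / fD (a', b', c', d'),
      by linarith [hS'.2], hS'.1.le, by ring, rfl⟩,
    ⟨1 - fNt (a', b', c', d') / fD (a', b', c', d'),
      fNt (a', b', c', d') / fD (a', b', c', d'),
      by linarith [hT'.2], hT'.1.le, by ring, ?_⟩⟩
  ext i
  simp only [fNs, fNt, fD] at hD' ⊢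
  fin_cases i
  · show (1 - _) * c' 0 + _ * d' 0 = (1 - _) * a' 0 + _ * b' 0
    field_simp
    ring
  · show (1 - _) * c' 1 + _ * d' 1 = (1 - _) * a' 1 + _ * b' 1
    field_simp
    ring
end

section
/- Let P = (p₀, …, p_{n−1}) be a polygon (n ≥ 3) and suppose there exist indices i, j whose edges e_i = [p_i, p_{i+1}] and e_j = [p_j, p_{j+1}] (indices mod n) are nonadjacent (share no index) and cross transversally: their interiors meet in exactly one point which is not an endpoint of either, and they are not collinear. Then P is not weakly simple; i.e., there exists ε > 0 such that no simple polygon (p'₀, …, p'_{n−1}) satisfies ‖p'_k − p_k‖ < ε for all k. -/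
set_option linter.unnecessarySeqFocus false

local notation "EE" => EuclideanSpace ℝ (Fin 2)

/-- Signed area (cross product) of the triangle `a b c` in the plane. -/
noncomputable def XX (a b c : EE) : ℝ :=
  (b 0 - a 0) * (c 1 - a 1) - (b 1 - a 1) * (c 0 - a 0)

lemma ratio_mem {x y : ℝ} (h : x * y < 0) : 0 < x / (x - y) ∧ x / (x - y) < 1 := by
  rcases mul_neg_iff.mp h with ⟨hx, hy⟩ | ⟨hx, hy⟩
  · have hd : 0 < x - y := by linarith
    exact ⟨div_pos hx hd, (div_lt_one hd).2 (by linarith)⟩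
  · have hd : x - y < 0 := by linarith
    have hd' : x - y ≠ 0 := ne_of_lt hd
    refine ⟨div_pos_of_neg_of_neg hx hd, ?_⟩
    have h1 : x / (x - y) - 1 = y / (x - y) := by
      rw [div_sub_one hd']; ring_nf
    have h2 : y / (x - y) < 0 := div_neg_of_pos_of_neg hy hd
    linarith

lemma XX_affine (p q a b : EE) {u v : ℝ} (huv : u + v = 1) :
    XX p q (u • a + v • b) = u * XX p q a + v * XX p q b := by
  have hv : v = 1 - u := by linarith
  subst hv
  simp only [XX, PiLp.add_apply, PiLp.smul_apply, smul_eq_mul]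
  ring

lemma XX_self_left (p q : EE) : XX p q p = 0 := by simp only [XX]; ring

lemma XX_self_right (p q : EE) : XX p q q = 0 := by simp only [XX]; ring

lemma funext2 {c d : EE} (h0 : c 0 = d 0) (h1 : c 1 = d 1) : c = d := by
  refine PiLp.ext ?_
  rw [Fin.forall_fin_two]
  exact ⟨h0, h1⟩

lemma exists_smul_of_XX_eq_zero {c d : EE} (hcd : c ≠ d) {a : EE} (h : XX c d a = 0) :
    ∃ r : ℝ, a = r • (d - c) + c := by
  have hne : d 0 - c 0 ≠ 0 ∨ d 1 - c 1 ≠ 0 := by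
    by_contra hco
    push_neg at hco
    exact hcd (funext2 (by linarith [hco.1]) (by linarith [hco.2])).symm
  simp only [XX] at h
  rcases hne with h0 | h1
  · refine ⟨(a 0 - c 0) / (d 0 - c 0), ?_⟩
    refine (funext2 ?_ ?_).symm <;>
      simp only [PiLp.add_apply, PiLp.smul_apply, PiLp.sub_apply, smul_eq_mul] <;>
      field_simp <;> nlinarith [h]
  · refine ⟨(a 1 - c 1) / (d 1 - c 1), ?_⟩
    refine (funext2 ?_ ?_).symm <;>
      simp only [PiLp.add_apply, PiLp.smul_apply, PiLp.sub_apply, smul_eq_mul] <;>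
      field_simp <;> nlinarith [h]

/-- Two segments whose endpoints strictly straddle each other's lines intersect. -/
lemma segs_meet {a b c d : EE} (h1 : XX a b c * XX a b d < 0)
    (h2 : XX c d a * XX c d b < 0) :
    (segment ℝ a b ∩ segment ℝ c d).Nonempty := by
  have hdt : XX c d a - XX c d b ≠ 0 := by
    intro e
    rw [sub_eq_zero] at e
    rw [e] at h2
    nlinarith [mul_self_nonneg (XX c d b)]
  have hds : XX a b c - XX a b d ≠ 0 := by
    intro e
    rw [sub_eq_zero] at e
    rw [e] at h1
    nlinarith [mul_self_nonneg (XX a b d)]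
  obtain ⟨ht0, ht1⟩ := ratio_mem h2
  obtain ⟨hs0, hs1⟩ := ratio_mem h1
  have key : (1 - XX c d a / (XX c d a - XX c d b)) • a
        + (XX c d a / (XX c d a - XX c d b)) • b
      = (1 - XX a b c / (XX a b c - XX a b d)) • c
        + (XX a b c / (XX a b c - XX a b d)) • d := by
    have hdt' := hdt
    have hds' := hds
    simp only [XX] at hdt' hds' ⊢
    apply funext2 <;>
    · simp only [PiLp.add_apply, PiLp.smul_apply, smul_eq_mul]
      field_simp
      ring
  refine ⟨(1 - XX c d a / (XX c d a - XX c d b)) • a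
        + (XX c d a / (XX c d a - XX c d b)) • b, ?_, ?_⟩
  · exact ⟨_, _, by linarith, le_of_lt ht0, by ring, rfl⟩
  · rw [key]
    exact ⟨_, _, by linarith, le_of_lt hs0, by ring, rfl⟩

/-- At a transversal crossing, the endpoints of one segment strictly straddle
the line of the other. -/
lemma sign_aux {a b c d x : EE} (hcd : c ≠ d)
    (hxab : x ∈ openSegment ℝ a b) (hxcd : x ∈ openSegment ℝ c d)
    (hcol : ¬ Collinear ℝ ({a, b, c, d} : Set EE)) :
    XX c d a * XX c d b < 0 := by
  obtain ⟨u, v, hu, hv, huv, hx1⟩ := hxab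
  obtain ⟨u', v', hu', hv', huv', hx2⟩ := hxcd
  have hline : XX c d x = 0 := by
    rw [← hx2, XX_affine c d c d huv', XX_self_left, XX_self_right]; ring
  have h0 : u * XX c d a + v * XX c d b = 0 := by
    rw [← XX_affine c d a b huv, hx1, hline]
  by_cases hA : XX c d a = 0
  · exfalso
    have hB : XX c d b = 0 := by
      rw [hA] at h0
      have : v * XX c d b = 0 := by linarith
      rcases mul_eq_zero.mp this with h | h
      · exact absurd h (ne_of_gt hv)
      · exact h
    obtain ⟨ra, hra⟩ := exists_smul_of_XX_eq_zero hcd hA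
    obtain ⟨rb, hrb⟩ := exists_smul_of_XX_eq_zero hcd hB
    apply hcol
    rw [collinear_iff_of_mem (show c ∈ ({a, b, c, d} : Set EE) by simp)]
    refine ⟨d - c, ?_⟩
    rintro p (rfl | rfl | rfl | rfl)
    · exact ⟨ra, by rw [vadd_eq_add]; exact hra⟩
    · exact ⟨rb, by rw [vadd_eq_add]; exact hrb⟩
    · exact ⟨0, by simp⟩
    · exact ⟨1, by rw [vadd_eq_add, one_smul]; abel⟩
  · have hA2 : 0 < XX c d a * XX c d a := mul_self_pos.mpr hA
    have h0A : (u * XX c d a + v * XX c d b) * XX c d a = 0 := by rw [h0]; ring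
    nlinarith [h0A, hA2, hu, hv]

lemma contXX1 : Continuous fun z : (EE × EE) × EE × EE =>
    XX z.1.1 z.1.2 z.2.1 * XX z.1.1 z.1.2 z.2.2 := by
  unfold XX; fun_prop

lemma contXX2 : Continuous fun z : (EE × EE) × EE × EE =>
    XX z.2.1 z.2.2 z.1.1 * XX z.2.1 z.2.2 z.1.2 := by
  unfold XX; fun_prop

/-- A closed polygonal curve with `n` vertices `q 0, …, q (n-1)` (indices mod `n`)
is simple: vertices are distinct, nonadjacent edges are disjoint, and adjacent
edges meet only at their shared vertex. -/
def IsSimplePolygon (n : ℕ) (q : ℕ → EuclideanSpace ℝ (Fin 2)) : Prop :=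
  (∀ i < n, ∀ j < n, q i = q j → i = j) ∧
  (∀ i < n, ∀ j < n, i ≠ j → (i + 1) % n ≠ j → (j + 1) % n ≠ i →
    segment ℝ (q i) (q ((i + 1) % n)) ∩ segment ℝ (q j) (q ((j + 1) % n)) = ∅) ∧
  (∀ i < n, segment ℝ (q i) (q ((i + 1) % n)) ∩
      segment ℝ (q ((i + 1) % n)) (q ((i + 2) % n)) = {q ((i + 1) % n)})

/-- A polygon with a transversal edge crossing between two nonadjacent edges is
not weakly simple: some `ε > 0` admits no simple polygon within vertexwise
distance `ε`. -/
theorem not_weakly_simple_of_transversal_crossing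
    (n : ℕ) (hn : 3 ≤ n) (p : ℕ → EuclideanSpace ℝ (Fin 2))
    (i j : ℕ) (hi : i < n) (hj : j < n)
    (hij : i ≠ j) (hij1 : i ≠ (j + 1) % n) (hji1 : j ≠ (i + 1) % n)
    (x : EuclideanSpace ℝ (Fin 2))
    (hx : openSegment ℝ (p i) (p ((i + 1) % n)) ∩
          openSegment ℝ (p j) (p ((j + 1) % n)) = {x})
    (hxe : x ∉ ({p i, p ((i + 1) % n), p j, p ((j + 1) % n)} :
      Set (EuclideanSpace ℝ (Fin 2))))
    (hcol : ¬ Collinear ℝ ({p i, p ((i + 1) % n), p j, p ((j + 1) % n)} :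
      Set (EuclideanSpace ℝ (Fin 2)))) :
    ∃ ε > 0, ∀ q : ℕ → EuclideanSpace ℝ (Fin 2),
      (∀ k < n, ‖q k - p k‖ < ε) → ¬ IsSimplePolygon n q := by
  set a := p i with ha
  set b := p ((i + 1) % n) with hb
  set c := p j with hc
  set d := p ((j + 1) % n) with hd
  have hxmem : x ∈ openSegment ℝ a b ∩ openSegment ℝ c d := by
    rw [hx]; rfl
  have hab : a ≠ b := by
    intro e
    apply hxe
    have h1 := hxmem.1
    rw [e, openSegment_same] at h1
    have : x = b := h1
    simp [this]
  have hcd : c ≠ d := by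
    intro e
    apply hxe
    have h1 := hxmem.2
    rw [e, openSegment_same] at h1
    have : x = d := h1
    simp [this]
  have hcol' : ¬ Collinear ℝ ({c, d, a, b} : Set EE) := by
    intro hco
    apply hcol
    have hset : ({a, b, c, d} : Set EE) = ({c, d, a, b} : Set EE) := by
      ext y; simp only [Set.mem_insert_iff, Set.mem_singleton_iff]; tauto
    rw [hset]; exact hco
  have hsign2 : XX c d a * XX c d b < 0 := sign_aux hcd hxmem.1 hxmem.2 hcol
  have hsign1 : XX a b c * XX a b d < 0 := sign_aux hab hxmem.2 hxmem.1 hcol'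
  -- open set of quadruples where both strict sign conditions hold
  have hUopen : IsOpen {z : (EE × EE) × EE × EE |
      XX z.1.1 z.1.2 z.2.1 * XX z.1.1 z.1.2 z.2.2 < 0 ∧
      XX z.2.1 z.2.2 z.1.1 * XX z.2.1 z.2.2 z.1.2 < 0} := by
    exact (isOpen_lt contXX1 continuous_const).inter (isOpen_lt contXX2 continuous_const)
  have hPmem : ((a, b), (c, d)) ∈ {z : (EE × EE) × EE × EE |
      XX z.1.1 z.1.2 z.2.1 * XX z.1.1 z.1.2 z.2.2 < 0 ∧
      XX z.2.1 z.2.2 z.1.1 * XX z.2.1 z.2.2 z.1.2 < 0} := ⟨hsign1, hsign2⟩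
  obtain ⟨ε, hε, hball⟩ := Metric.isOpen_iff.mp hUopen _ hPmem
  refine ⟨ε, hε, ?_⟩
  intro q hq hsimp
  have hi1 : (i + 1) % n < n := Nat.mod_lt _ (by omega)
  have hj1 : (j + 1) % n < n := Nat.mod_lt _ (by omega)
  have hz : ((q i, q ((i + 1) % n)), (q j, q ((j + 1) % n))) ∈
      Metric.ball (((a, b), (c, d)) : (EE × EE) × EE × EE) ε := by
    rw [Metric.mem_ball, Prod.dist_eq, Prod.dist_eq, Prod.dist_eq]
    simp only [dist_eq_norm]
    exact max_lt (max_lt (hq i hi) (hq _ hi1)) (max_lt (hq j hj) (hq _ hj1))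
  have hzU := hball hz
  obtain ⟨y, hy1, hy2⟩ := segs_meet hzU.1 hzU.2
  have hemp := hsimp.2.1 i hi j hj hij (fun e => hji1 e.symm) (fun e => hij1 e.symm)
  rw [Set.eq_empty_iff_forall_notMem] at hemp
  exact hemp y ⟨hy1, hy2⟩
end

section
/- Let p, q ∈ ℝ² be distinct points and k ≥ 2. The polygon with 2k vertices alternating between p and q, namely (p, q, p, q, …, p, q), is weakly simple: for every ε > 0 there exists a simple polygon (p'₀, …, p'_{2k−1}) with ‖p'_{2i} − p‖ < ε and ‖p'_{2i+1} − q‖ < ε for all i. -/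
open Real
open RealInnerProductSpace

private lemma abs_cos_sub_cos_le (s t : ℝ) : |Real.cos s - Real.cos t| ≤ |s - t| := by
  rw [Real.cos_sub_cos]
  have h1 : |Real.sin ((s + t) / 2)| ≤ 1 := Real.abs_sin_le_one _
  have h2 : |Real.sin ((s - t) / 2)| ≤ |(s - t) / 2| := Real.abs_sin_le_abs
  rw [abs_mul, abs_mul]
  have : |(s-t)/2| = |s-t|/2 := by rw [abs_div]; norm_num
  rw [this] at h2
  have h3 : |(-2 : ℝ)| = 2 := by norm_num
  rw [h3]
  nlinarith [abs_nonneg (Real.sin ((s+t)/2)), abs_nonneg (Real.sin ((s-t)/2)), abs_nonneg (s-t)]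

private lemma abs_sin_sub_sin_le (s t : ℝ) : |Real.sin s - Real.sin t| ≤ |s - t| := by
  rw [Real.sin_sub_sin]
  have h1 : |Real.cos ((s + t) / 2)| ≤ 1 := Real.abs_cos_le_one _
  have h2 : |Real.sin ((s - t) / 2)| ≤ |(s - t) / 2| := Real.abs_sin_le_abs
  rw [abs_mul, abs_mul]
  have : |(s-t)/2| = |s-t|/2 := by rw [abs_div]; norm_num
  rw [this] at h2
  have h3 : |(2 : ℝ)| = 2 := by norm_num
  rw [h3]
  nlinarith [abs_nonneg (Real.sin ((s-t)/2)), abs_nonneg (Real.cos ((s+t)/2)), abs_nonneg (s-t)]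

private lemma det3 (r1 r2 r3 α β γ : ℝ) :
    (r1 * Real.cos α - r2 * Real.cos β) * (r3 * Real.sin γ - r2 * Real.sin β)
      - (r3 * Real.cos γ - r2 * Real.cos β) * (r1 * Real.sin α - r2 * Real.sin β)
    = r1 * r3 * Real.sin (γ - α) - r1 * r2 * Real.sin (β - α) - r2 * r3 * Real.sin (γ - β) := by
  rw [Real.sin_sub, Real.sin_sub, Real.sin_sub]; ring

private lemma cone_of_mem_segment {E : Type*} [NormedAddCommGroup E] [NormedSpace ℝ E]
    {qc x y z : E} {r s : ℝ} (hr : 0 < r) (hs : 0 < s)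
    (h : z ∈ segment ℝ (qc + r • x) (qc + s • y)) :
    ∃ c₁ c₂ : ℝ, 0 ≤ c₁ ∧ 0 ≤ c₂ ∧ 0 < c₁ + c₂ ∧ z - qc = c₁ • x + c₂ • y := by
  rcases h with ⟨a, b, ha, hb, hab, hz⟩
  refine ⟨a * r, b * s, by positivity, by positivity, ?_, ?_⟩
  · have hab' : 0 < a ∨ 0 < b := by
      by_contra hc; push_neg at hc; obtain ⟨h1, h2⟩ := hc
      nlinarith
    rcases hab' with h1 | h1
    · nlinarith [mul_nonneg hb hs.le]
    · nlinarith [mul_nonneg ha hr.le]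
  · rw [← hz]
    have hb' : b = 1 - a := by linarith
    subst hb'
    module

private lemma seg_disjoint_of_functional {E : Type*} [NormedAddCommGroup E] [InnerProductSpace ℝ E]
    {qc F x₁ y₁ x₂ y₂ : E} {r₁ s₁ r₂ s₂ : ℝ}
    (hr₁ : 0 < r₁) (hs₁ : 0 < s₁) (hr₂ : 0 < r₂) (hs₂ : 0 < s₂)
    (h1 : ⟪F, x₁⟫ ≤ 0) (h2 : ⟪F, y₁⟫ ≤ 0) (h3 : 0 < ⟪F, x₂⟫) (h4 : 0 < ⟪F, y₂⟫) :
    segment ℝ (qc + r₁ • x₁) (qc + s₁ • y₁) ∩ segment ℝ (qc + r₂ • x₂) (qc + s₂ • y₂) = ∅ := by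
  ext z
  simp only [Set.mem_inter_iff, Set.mem_empty_iff_false, iff_false, not_and]
  intro hz1 hz2
  obtain ⟨c₁, c₂, hc₁, hc₂, hcs, hcz⟩ := cone_of_mem_segment hr₁ hs₁ hz1
  obtain ⟨d₁, d₂, hd₁, hd₂, hds, hdz⟩ := cone_of_mem_segment hr₂ hs₂ hz2
  have e1 : ⟪F, z - qc⟫ ≤ 0 := by
    rw [hcz, inner_add_right, real_inner_smul_right, real_inner_smul_right]
    nlinarith
  have e2 : 0 < ⟪F, z - qc⟫ := by
    rw [hdz, inner_add_right, real_inner_smul_right, real_inner_smul_right]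
    rcases lt_or_ge 0 d₁ with h | h
    · nlinarith [mul_nonneg hd₂ h4.le]
    · have hd10 : d₁ = 0 := le_antisymm h hd₁
      have : 0 < d₂ := by rw [hd10] at hds; linarith
      nlinarith
  linarith

private lemma wedge_inter {E : Type*} [NormedAddCommGroup E] [InnerProductSpace ℝ E]
    (F G x y z : E)
    (hdet : ⟪F, x - y⟫ * ⟪G, z - y⟫ ≠ ⟪F, z - y⟫ * ⟪G, x - y⟫) :
    segment ℝ x y ∩ segment ℝ y z = {y} := by
  ext v
  simp only [Set.mem_inter_iff, Set.mem_singleton_iff]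
  constructor
  · rintro ⟨⟨a, b, ha, hb, hab, h1⟩, ⟨c, d, hc, hd, hcd, h2⟩⟩
    have hxy : v - y = a • (x - y) := by
      rw [← h1]
      have hb' : b = 1 - a := by linarith
      subst hb'; module
    have hzy : v - y = d • (z - y) := by
      rw [← h2]
      have hc' : c = 1 - d := by linarith
      subst hc'; module
    have hFa : a * ⟪F, x - y⟫ = d * ⟪F, z - y⟫ := by
      rw [← real_inner_smul_right, ← real_inner_smul_right, ← hxy, ← hzy]
    have hGa : a * ⟪G, x - y⟫ = d * ⟪G, z - y⟫ := by
      rw [← real_inner_smul_right, ← real_inner_smul_right, ← hxy, ← hzy]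
    have ha0 : a = 0 := by
      by_contra h0
      apply hdet
      have key : a * (⟪F, x - y⟫ * ⟪G, z - y⟫) = a * (⟪F, z - y⟫ * ⟪G, x - y⟫) := by
        calc a * (⟪F, x - y⟫ * ⟪G, z - y⟫) = (a * ⟪F, x - y⟫) * ⟪G, z - y⟫ := by ring
        _ = (d * ⟪F, z - y⟫) * ⟪G, z - y⟫ := by rw [hFa]
        _ = ⟪F, z - y⟫ * (d * ⟪G, z - y⟫) := by ring
        _ = ⟪F, z - y⟫ * (a * ⟪G, x - y⟫) := by rw [hGa]
        _ = a * (⟪F, z - y⟫ * ⟪G, x - y⟫) := by ring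
      exact mul_left_cancel₀ h0 key
    have : v - y = 0 := by rw [hxy, ha0, zero_smul]
    exact sub_eq_zero.mp this
  · rintro rfl
    exact ⟨right_mem_segment _ _ _, left_mem_segment _ _ _⟩


open Real

private lemma det_scale {X W Z V d2 : ℝ} (hd2 : d2 ≠ 0) (h : X * W ≠ Z * V) :
    (X * d2) * (W * d2) ≠ (Z * d2) * (V * d2) := by
  intro hEq
  apply h
  have h0 : (X * W - Z * V) * d2 ^ 2 = 0 := by linear_combination hEq
  rcases mul_eq_zero.mp h0 with h1 | h1
  · linarith [sub_eq_zero.mp h1]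
  · exact absurd h1 (pow_ne_zero 2 hd2)

private lemma cos_pos_small {x : ℝ} (h0 : 0 ≤ x) (h1 : x ≤ 1) : 0 < Real.cos x := by
  have hπ : (3:ℝ) < π := Real.pi_gt_three
  exact Real.cos_pos_of_mem_Ioo ⟨by nlinarith, by nlinarith⟩

private lemma cos_shift_neg {y : ℝ} (h0 : 0 ≤ y) (h1 : y ≤ 1) : Real.cos (π + y) < 0 := by
  rw [show π + y = y + π by ring, Real.cos_add_pi, neg_lt, neg_zero]
  exact cos_pos_small h0 h1

private lemma caseA1 (kr σ iR jR : ℝ) (hk : 2 ≤ kr) (hσ : 0 < σ) (hσ1 : 2 * kr * σ ≤ 1)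
    (h0i : 0 ≤ iR) (hij : iR + 2 ≤ jR) (hj : jR ≤ 2 * kr - 1) :
    Real.sin (iR * σ - (iR + 1 + jR) * σ / 2) ≤ 0 ∧
    Real.sin ((iR + 1) * σ - (iR + 1 + jR) * σ / 2) ≤ 0 ∧
    0 < Real.sin (jR * σ - (iR + 1 + jR) * σ / 2) ∧
    0 < Real.sin ((jR + 1) * σ - (iR + 1 + jR) * σ / 2) := by
  have hπ : (3:ℝ) < π := Real.pi_gt_three
  refine ⟨?_, ?_, ?_, ?_⟩
  · rw [show iR * σ - (iR + 1 + jR) * σ / 2 = -((jR - iR + 1) * σ / 2) by ring, Real.sin_neg,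
      neg_nonpos]
    exact Real.sin_nonneg_of_nonneg_of_le_pi (by nlinarith) (by nlinarith)
  · rw [show (iR + 1) * σ - (iR + 1 + jR) * σ / 2 = -((jR - iR - 1) * σ / 2) by ring,
      Real.sin_neg, neg_nonpos]
    exact Real.sin_nonneg_of_nonneg_of_le_pi (by nlinarith) (by nlinarith)
  · rw [show jR * σ - (iR + 1 + jR) * σ / 2 = (jR - iR - 1) * σ / 2 by ring]
    exact Real.sin_pos_of_pos_of_lt_pi (by nlinarith) (by nlinarith)
  · rw [show (jR + 1) * σ - (iR + 1 + jR) * σ / 2 = (jR - iR + 1) * σ / 2 by ring]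
    exact Real.sin_pos_of_pos_of_lt_pi (by nlinarith) (by nlinarith)

private lemma caseA2 (kr σ iR jR : ℝ) (hk : 2 ≤ kr) (hσ : 0 < σ) (hσ1 : 2 * kr * σ ≤ 1)
    (h0i : 0 ≤ iR) (hij : iR + 2 ≤ jR) (hj2 : jR = 2 * kr - 2) :
    Real.sin (iR * σ - (iR + 1 + jR) * σ / 2) ≤ 0 ∧
    Real.sin ((iR + 1) * σ - (iR + 1 + jR) * σ / 2) ≤ 0 ∧
    0 < Real.sin (jR * σ - (iR + 1 + jR) * σ / 2) ∧
    0 < Real.sin (π + (kr - 1) * σ - (iR + 1 + jR) * σ / 2) := by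
  have hπ : (3:ℝ) < π := Real.pi_gt_three
  obtain ⟨g1, g2, g3, _⟩ := caseA1 kr σ iR jR hk hσ hσ1 h0i hij (by linarith)
  refine ⟨g1, g2, g3, ?_⟩
  rw [show π + (kr - 1) * σ - (iR + 1 + jR) * σ / 2
      = π - ((iR + 1 + jR) / 2 - (kr - 1)) * σ by ring, Real.sin_pi_sub]
  have harg : (iR + 1 + jR) / 2 - (kr - 1) = (iR + 1) / 2 := by rw [hj2]; ring
  rw [harg]
  exact Real.sin_pos_of_pos_of_lt_pi (by nlinarith) (by nlinarith)

private lemma caseB (kr σ iR : ℝ) (hk : 2 ≤ kr) (hσ : 0 < σ) (hσ1 : 2 * kr * σ ≤ 1)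
    (hi1 : 1 ≤ iR) (hile : iR ≤ 2 * kr - 3) :
    Real.sin (π + (kr - 1) * σ - iR * σ / 2) ≤ 0 ∧
    Real.sin (0 - iR * σ / 2) ≤ 0 ∧
    0 < Real.sin (iR * σ - iR * σ / 2) ∧
    0 < Real.sin ((iR + 1) * σ - iR * σ / 2) := by
  have hπ : (3:ℝ) < π := Real.pi_gt_three
  refine ⟨?_, ?_, ?_, ?_⟩
  · rw [show π + (kr - 1) * σ - iR * σ / 2 = ((kr - 1) - iR / 2) * σ + π by ring,
      Real.sin_add_pi, neg_nonpos]
    exact Real.sin_nonneg_of_nonneg_of_le_pi (by nlinarith) (by nlinarith)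
  · rw [show (0:ℝ) - iR * σ / 2 = -(iR * σ / 2) by ring, Real.sin_neg, neg_nonpos]
    exact Real.sin_nonneg_of_nonneg_of_le_pi (by nlinarith) (by nlinarith)
  · rw [show iR * σ - iR * σ / 2 = iR * σ / 2 by ring]
    exact Real.sin_pos_of_pos_of_lt_pi (by nlinarith) (by nlinarith)
  · rw [show (iR + 1) * σ - iR * σ / 2 = (iR + 2) * σ / 2 by ring]
    exact Real.sin_pos_of_pos_of_lt_pi (by nlinarith) (by nlinarith)

private lemma params_exist (ε d kr : ℝ) (hε : 0 < ε) (hd : 0 < d) (hk : 2 ≤ kr) :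
    ∃ σ ρ : ℝ, 0 < σ ∧ 2 * kr * σ ≤ 1 ∧ 4 * d * kr * σ ≤ ε / 2 ∧ σ ≤ 1 / 4 ∧
      0 < ρ ∧ ρ ≤ 1 / 2 ∧ ρ * d ≤ ε / 2 := by
  refine ⟨min (ε / (8 * d * kr)) (1 / (2 * kr)), min (ε / (2 * d)) (1 / 2), ?_, ?_, ?_, ?_, ?_,
    min_le_right _ _, ?_⟩
  · exact lt_min (div_pos hε (by nlinarith)) (div_pos one_pos (by nlinarith))
  · have h := min_le_right (ε / (8 * d * kr)) (1 / (2 * kr))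
    have h2 : 2 * kr * (1 / (2 * kr)) = 1 := by field_simp
    nlinarith [lt_min (div_pos hε (by nlinarith : (0:ℝ) < 8 * d * kr))
      (div_pos one_pos (by nlinarith : (0:ℝ) < 2 * kr))]
  · have h := min_le_left (ε / (8 * d * kr)) (1 / (2 * kr))
    have key : 4 * d * kr * (ε / (8 * d * kr)) = ε / 2 := by
      field_simp; ring
    have h4 : (0:ℝ) ≤ 4 * d * kr := by nlinarith
    have := mul_le_mul_of_nonneg_left h h4
    linarith
  · have h := min_le_right (ε / (8 * d * kr)) (1 / (2 * kr))
    have h3 : 1 / (2 * kr) ≤ 1 / 4 := by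
      rw [div_le_div_iff₀ (by nlinarith) (by norm_num)]; nlinarith
    linarith
  · exact lt_min (div_pos hε (by nlinarith)) (by norm_num)
  · have h := min_le_left (ε / (2 * d)) (1 / 2)
    have key : ε / (2 * d) * d = ε / 2 := by field_simp
    nlinarith [lt_min (div_pos hε (by nlinarith : (0:ℝ) < 2 * d)) (by norm_num : (0:ℝ) < 1/2)]

private lemma dist_even_bound (d kr iR σ ε : ℝ) (hd : 0 < d) (h1 : 0 ≤ iR) (h2 : iR ≤ 2 * kr)
    (hσpos : 0 < σ) (hσε : 4 * d * kr * σ ≤ ε / 2) (hε : 0 < ε) : 2 * d * (iR * σ) < ε := by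
  have h3 : iR * σ ≤ 2 * kr * σ := mul_le_mul_of_nonneg_right h2 hσpos.le
  have h4 : 2 * d * (iR * σ) ≤ 2 * d * (2 * kr * σ) :=
    mul_le_mul_of_nonneg_left h3 (by nlinarith)
  nlinarith

private lemma det3' (r1 r2 r3 α β γ : ℝ) :
    (r1 * Real.cos α - r2 * Real.cos β) * (r3 * Real.sin γ - r2 * Real.sin β)
      - (r3 * Real.cos γ - r2 * Real.cos β) * (r1 * Real.sin α - r2 * Real.sin β)
    = r1 * r3 * Real.sin (γ - α) - r1 * r2 * Real.sin (β - α) - r2 * r3 * Real.sin (γ - β) := by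
  rw [Real.sin_sub, Real.sin_sub, Real.sin_sub]; ring

private lemma detW1 (σ a ρ rr rm : ℝ) (hσ : 0 < σ) (hσq : σ ≤ 1 / 4)
    (hcos : 1 / 2 < Real.cos σ) (hρpos : 0 < ρ) (hρhalf : ρ ≤ 1 / 2)
    (hpar : (rr = 1 ∧ rm = ρ) ∨ (rr = ρ ∧ rm = 1)) :
    (rr * Real.cos a - rm * Real.cos (a + σ)) * (rr * Real.sin (a + 2 * σ) - rm * Real.sin (a + σ))
      ≠ (rr * Real.cos (a + 2 * σ) - rm * Real.cos (a + σ)) * (rr * Real.sin a - rm * Real.sin (a + σ)) := by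
  have hπ : (3:ℝ) < π := Real.pi_gt_three
  intro hEq
  have h0 := det3' rr rm rr a (a + σ) (a + 2 * σ)
  rw [show a + 2 * σ - a = 2 * σ by ring, show a + σ - a = σ by ring,
    show a + 2 * σ - (a + σ) = σ by ring, Real.sin_two_mul] at h0
  have h1 : rr * rr * (2 * Real.sin σ * Real.cos σ) - rr * rm * Real.sin σ
      - rm * rr * Real.sin σ = 0 := by rw [← h0]; linear_combination hEq
  have hs : 0 < Real.sin σ := Real.sin_pos_of_pos_of_lt_pi hσ (by nlinarith)
  have hc1 : Real.cos σ ≤ 1 := Real.cos_le_one σ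
  have hρc : ρ * Real.cos σ ≤ ρ := by nlinarith
  rcases hpar with ⟨h2, h3⟩ | ⟨h2, h3⟩ <;> rw [h2, h3] at h1 <;>
    nlinarith [mul_pos hρpos hs, hs.le]

private lemma sin_mono_small {x y : ℝ} (h0 : 0 ≤ x) (hxy : x ≤ y) (hy : y ≤ 1) :
    Real.sin x ≤ Real.sin y := by
  have hπ : (3:ℝ) < π := Real.pi_gt_three
  exact Real.strictMonoOn_sin.monotoneOn ⟨by nlinarith, by nlinarith⟩
    ⟨by nlinarith, by nlinarith⟩ hxy

private lemma detW2core (kr σ ρ : ℝ) (hk : 2 ≤ kr) (hσ : 0 < σ) (hσ1 : 2 * kr * σ ≤ 1)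
    (hρpos : 0 < ρ) (hρhalf : ρ ≤ 1 / 2)
    (h1 : ρ * ρ * Real.sin ((kr - 2) * σ) - ρ * Real.sin ((kr - 1) * σ) - ρ * Real.sin σ = 0) :
    False := by
  have hπ : (3:ℝ) < π := Real.pi_gt_three
  have m1 : Real.sin ((kr - 2) * σ) ≤ Real.sin ((kr - 1) * σ) :=
    sin_mono_small (by nlinarith) (by nlinarith) (by nlinarith)
  have s1 : 0 < Real.sin σ := Real.sin_pos_of_pos_of_lt_pi hσ (by nlinarith)
  have s2 : 0 ≤ Real.sin ((kr - 2) * σ) :=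
    Real.sin_nonneg_of_nonneg_of_le_pi (by nlinarith) (by nlinarith)
  have hs1' : 0 ≤ Real.sin ((kr - 1) * σ) := le_trans s2 m1
  have hρ2 : ρ * ρ ≤ ρ := by nlinarith
  nlinarith [mul_pos hρpos s1, mul_le_mul_of_nonneg_left m1 (mul_pos hρpos hρpos).le,
    mul_le_mul_of_nonneg_right hρ2 hs1']

private lemma detW2 (kr σ ρ : ℝ) (hk : 2 ≤ kr) (hσ : 0 < σ) (hσ1 : 2 * kr * σ ≤ 1)
    (hρpos : 0 < ρ) (hρhalf : ρ ≤ 1 / 2) :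
    (ρ * Real.cos ((2 * kr - 3) * σ) - 1 * Real.cos ((2 * kr - 2) * σ)) *
      (ρ * Real.sin (π + (kr - 1) * σ) - 1 * Real.sin ((2 * kr - 2) * σ))
    ≠ (ρ * Real.cos (π + (kr - 1) * σ) - 1 * Real.cos ((2 * kr - 2) * σ)) *
      (ρ * Real.sin ((2 * kr - 3) * σ) - 1 * Real.sin ((2 * kr - 2) * σ)) := by
  intro hEq
  have h0 := det3' ρ 1 ρ ((2 * kr - 3) * σ) ((2 * kr - 2) * σ) (π + (kr - 1) * σ)
  rw [show π + (kr - 1) * σ - (2 * kr - 3) * σ = π - (kr - 2) * σ by ring,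
    show (2 * kr - 2) * σ - (2 * kr - 3) * σ = σ by ring,
    show π + (kr - 1) * σ - (2 * kr - 2) * σ = π - (kr - 1) * σ by ring,
    Real.sin_pi_sub, Real.sin_pi_sub] at h0
  have h1 : ρ * ρ * Real.sin ((kr - 2) * σ) - ρ * Real.sin ((kr - 1) * σ) - ρ * Real.sin σ = 0 := by
    have hz := sub_eq_zero_of_eq hEq
    rw [h0] at hz
    linear_combination hz
  exact detW2core kr σ ρ hk hσ hσ1 hρpos hρhalf h1

private lemma detW3 (kr σ ρ : ℝ) (hk : 2 ≤ kr) (hσ : 0 < σ) (hσ1 : 2 * kr * σ ≤ 1)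
    (hρpos : 0 < ρ) (hρhalf : ρ ≤ 1 / 2) :
    (1 * Real.cos ((2 * kr - 2) * σ) - ρ * Real.cos (π + (kr - 1) * σ)) *
      (1 * Real.sin 0 - ρ * Real.sin (π + (kr - 1) * σ))
    ≠ (1 * Real.cos 0 - ρ * Real.cos (π + (kr - 1) * σ)) *
      (1 * Real.sin ((2 * kr - 2) * σ) - ρ * Real.sin (π + (kr - 1) * σ)) := by
  have hπ : (3:ℝ) < π := Real.pi_gt_three
  intro hEq
  have h0 := det3' 1 ρ 1 ((2 * kr - 2) * σ) (π + (kr - 1) * σ) 0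
  rw [show (0:ℝ) - (2 * kr - 2) * σ = -((2 * kr - 2) * σ) by ring,
    show π + (kr - 1) * σ - (2 * kr - 2) * σ = π - (kr - 1) * σ by ring,
    show (0:ℝ) - (π + (kr - 1) * σ) = -((kr - 1) * σ + π) by ring,
    Real.sin_neg, Real.sin_pi_sub, Real.sin_neg, Real.sin_add_pi, neg_neg] at h0
  have h1 : -Real.sin ((2 * kr - 2) * σ) - 2 * ρ * Real.sin ((kr - 1) * σ) = 0 := by
    have hz := sub_eq_zero_of_eq hEq
    rw [h0] at hz
    linear_combination hz
  have s1 : 0 < Real.sin ((2 * kr - 2) * σ) :=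
    Real.sin_pos_of_pos_of_lt_pi (by nlinarith) (by nlinarith)
  have s2 : 0 < Real.sin ((kr - 1) * σ) :=
    Real.sin_pos_of_pos_of_lt_pi (by nlinarith) (by nlinarith)
  nlinarith [mul_pos hρpos s2]

private lemma detW4 (kr σ ρ : ℝ) (hk : 2 ≤ kr) (hσ : 0 < σ) (hσ1 : 2 * kr * σ ≤ 1)
    (hρpos : 0 < ρ) (hρhalf : ρ ≤ 1 / 2) :
    (ρ * Real.cos (π + (kr - 1) * σ) - 1 * Real.cos 0) *
      (ρ * Real.sin σ - 1 * Real.sin 0)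
    ≠ (ρ * Real.cos σ - 1 * Real.cos 0) *
      (ρ * Real.sin (π + (kr - 1) * σ) - 1 * Real.sin 0) := by
  intro hEq
  have h0 := det3' ρ 1 ρ (π + (kr - 1) * σ) 0 σ
  rw [show σ - (π + (kr - 1) * σ) = -((kr - 2) * σ + π) by ring,
    show (0:ℝ) - (π + (kr - 1) * σ) = -((kr - 1) * σ + π) by ring,
    show σ - (0:ℝ) = σ by ring,
    Real.sin_neg, Real.sin_add_pi, Real.sin_neg, Real.sin_add_pi, neg_neg, neg_neg] at h0
  have h1 : ρ * ρ * Real.sin ((kr - 2) * σ) - ρ * Real.sin ((kr - 1) * σ) - ρ * Real.sin σ = 0 := by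
    have hz := sub_eq_zero_of_eq hEq
    rw [h0] at hz
    linear_combination hz
  exact detW2core kr σ ρ hk hσ hσ1 hρpos hρhalf h1


private lemma cos_half_of_small {σ : ℝ} (h0 : 0 < σ) (hq : σ ≤ 1 / 4) : 1 / 2 < Real.cos σ := by
  have hπ : (3:ℝ) < π := Real.pi_gt_three
  have h1 : Real.cos (π / 3) < Real.cos σ :=
    Real.strictAntiOn_cos ⟨by nlinarith, by nlinarith⟩ ⟨by nlinarith, by nlinarith⟩ (by nlinarith)
  rw [Real.cos_pi_div_three] at h1
  exact h1



/-- The polygon with `2k` vertices alternating between two distinct points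
`p` and `q` is weakly simple: for every `ε > 0` there is a simple polygon whose
even vertices are within `ε` of `p` and odd vertices within `ε` of `q`. -/
theorem alternating_polygon_weakly_simple
    (p q : EuclideanSpace ℝ (Fin 2)) (hpq : p ≠ q) (k : ℕ) (hk : 2 ≤ k) :
    ∀ ε > (0:ℝ), ∃ v : ℕ → EuclideanSpace ℝ (Fin 2),
      IsSimplePolygon (2 * k) v ∧
      ∀ i < 2 * k, (i % 2 = 0 → ‖v i - p‖ < ε) ∧ (i % 2 = 1 → ‖v i - q‖ < ε) := by
  intro ε hε
  set u : EuclideanSpace ℝ (Fin 2) := p - q with hu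
  have hu0 : u ≠ 0 := sub_ne_zero.mpr hpq
  set d : ℝ := ‖u‖ with hd
  have hdpos : 0 < d := norm_pos_iff.mpr hu0
  set w : EuclideanSpace ℝ (Fin 2) := (WithLp.toLp 2 (fun i : Fin 2 => if i = 0 then -(u 1) else u 0)) with hw
  have inner_comp : ∀ x y : EuclideanSpace ℝ (Fin 2), ⟪x, y⟫ = x 0 * y 0 + x 1 * y 1 := by
    intro x y; simp [PiLp.inner_apply, Fin.sum_univ_two, RCLike.inner_apply]; ring
  have hw0 : w 0 = -(u 1) := by simp [hw]
  have hw1 : w 1 = u 0 := by simp [hw]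
  have huw : ⟪u, w⟫ = 0 := by rw [inner_comp, hw0, hw1]; ring
  have hwu : ⟪w, u⟫ = 0 := by rw [real_inner_comm]; exact huw
  set d2 : ℝ := ⟪u, u⟫ with hd2
  have hd2d : d2 = d ^ 2 := by rw [hd2, real_inner_self_eq_norm_sq, hd]
  have hd2pos : 0 < d2 := by rw [hd2d]; positivity
  have hww : ⟪w, w⟫ = d2 := by rw [inner_comp, hd2, inner_comp, hw0, hw1]; ring
  set e : ℝ → EuclideanSpace ℝ (Fin 2) := (fun t => Real.cos t • u + Real.sin t • w) with he
  have inner_u_e : ∀ t, ⟪u, e t⟫ = Real.cos t * d2 := by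
    intro t
    simp only [he]
    rw [inner_add_right, real_inner_smul_right, real_inner_smul_right, huw, ← hd2]
    ring
  have inner_w_e : ∀ t, ⟪w, e t⟫ = Real.sin t * d2 := by
    intro t
    simp only [he]
    rw [inner_add_right, real_inner_smul_right, real_inner_smul_right, hwu, hww]
    ring
  set S : ℝ → EuclideanSpace ℝ (Fin 2) := (fun φ => Real.cos φ • w - Real.sin φ • u) with hS
  have inner_S_e : ∀ φ t, ⟪S φ, e t⟫ = Real.sin (t - φ) * d2 := by
    intro φ t
    simp only [hS]
    rw [inner_sub_left, real_inner_smul_left, real_inner_smul_left, inner_u_e, inner_w_e,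
      Real.sin_sub]
    ring
  have inner_e_e : ∀ t, ⟪e t, e t⟫ = d2 := by
    intro t
    have expand : ⟪e t, e t⟫ = Real.cos t * Real.cos t * ⟪u, u⟫ + Real.cos t * Real.sin t * ⟪u, w⟫
        + Real.sin t * Real.cos t * ⟪w, u⟫ + Real.sin t * Real.sin t * ⟪w, w⟫ := by
      simp only [he]
      rw [inner_add_left, inner_add_right, inner_add_right, real_inner_smul_left,
        real_inner_smul_left, real_inner_smul_left, real_inner_smul_left,
        real_inner_smul_right, real_inner_smul_right, real_inner_smul_right,
        real_inner_smul_right]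
      ring
    rw [expand, huw, hwu, hww, ← hd2]
    linear_combination d2 * Real.sin_sq_add_cos_sq t
  have norm_e : ∀ t, ‖e t‖ = d := by
    intro t
    have h1 : ‖e t‖ ^ 2 = d ^ 2 := by rw [← real_inner_self_eq_norm_sq, inner_e_e, hd2d]
    calc ‖e t‖ = Real.sqrt (‖e t‖ ^ 2) := (Real.sqrt_sq (norm_nonneg _)).symm
    _ = Real.sqrt (d ^ 2) := by rw [h1]
    _ = d := Real.sqrt_sq hdpos.le
  have hnw : ‖w‖ = d := by
    have h1 : ‖w‖ ^ 2 = d ^ 2 := by rw [← real_inner_self_eq_norm_sq, hww, hd2d]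
    calc ‖w‖ = Real.sqrt (‖w‖ ^ 2) := (Real.sqrt_sq (norm_nonneg _)).symm
    _ = Real.sqrt (d ^ 2) := by rw [h1]
    _ = d := Real.sqrt_sq hdpos.le
  have norm_e_sub : ∀ s t : ℝ, ‖e s - e t‖ ≤ 2 * d * |s - t| := by
    intro s t
    have hrep : e s - e t = (Real.cos s - Real.cos t) • u + (Real.sin s - Real.sin t) • w := by
      simp only [he]; module
    rw [hrep]
    calc ‖(Real.cos s - Real.cos t) • u + (Real.sin s - Real.sin t) • w‖
        ≤ ‖(Real.cos s - Real.cos t) • u‖ + ‖(Real.sin s - Real.sin t) • w‖ := norm_add_le _ _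
    _ = |Real.cos s - Real.cos t| * d + |Real.sin s - Real.sin t| * d := by
        rw [norm_smul, norm_smul, hnw, Real.norm_eq_abs, Real.norm_eq_abs, ← hd]
    _ ≤ |s - t| * d + |s - t| * d := by
        have h1 := _root_.abs_cos_sub_cos_le s t
        have h2 := _root_.abs_sin_sub_sin_le s t
        have h3 := hdpos.le
        gcongr
    _ = 2 * d * |s - t| := by ring
  -- parameters
  have hkR : (2:ℝ) ≤ (k:ℝ) := by exact_mod_cast hk
  obtain ⟨σ, ρ, hσpos, hσ1, hσε, hσq, hρpos, hρhalf, hρd⟩ :=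
    params_exist ε d (k:ℝ) hε hdpos hkR
  have hcoshalf : 1 / 2 < Real.cos σ := cos_half_of_small hσpos hσq
  set ψ : ℝ := π + ((k:ℝ) - 1) * σ with hψ
  set Θ : ℕ → ℝ := (fun m => if m = 2 * k - 1 then ψ else (m:ℝ) * σ) with hΘ
  set R : ℕ → ℝ := (fun m => if m % 2 = 0 then 1 else ρ) with hR
  set v : ℕ → EuclideanSpace ℝ (Fin 2) := (fun m => q + R m • e (Θ m)) with hv
  have hΘwin : ∀ m : ℕ, m ≠ 2 * k - 1 → Θ m = (m:ℝ) * σ := by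
    intro m hm; simp only [hΘ, if_neg hm]
  have hΘlast : Θ (2 * k - 1) = ψ := by simp only [hΘ, if_pos rfl]
  have hReven : ∀ m, m % 2 = 0 → R m = 1 := by intro m hm; simp only [hR, if_pos hm]
  have hRodd : ∀ m, m % 2 = 1 → R m = ρ := by
    intro m hm; simp only [hR]; rw [if_neg (by omega)]
  have hRpos : ∀ m, 0 < R m := by
    intro m
    rcases Nat.mod_two_eq_zero_or_one m with h | h
    · rw [hReven m h]; norm_num
    · rw [hRodd m h]; exact hρpos
  have hvm : ∀ m, v m = q + R m • e (Θ m) := fun m => rfl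
  have hwinR : ∀ m : ℕ, m < 2 * k → (m:ℝ) ≤ 2 * (k:ℝ) := by
    intro m hm; exact_mod_cast hm.le
  -- inner product of differences (for the wedge condition)
  have hdiff_u : ∀ a b : ℕ, ⟪u, v a - v b⟫
      = (R a * Real.cos (Θ a) - R b * Real.cos (Θ b)) * d2 := by
    intro a b
    have hab : v a - v b = R a • e (Θ a) - R b • e (Θ b) := by
      rw [hvm, hvm]; abel
    rw [hab, inner_sub_right, real_inner_smul_right, real_inner_smul_right, inner_u_e,
      inner_u_e]
    ring
  have hdiff_w : ∀ a b : ℕ, ⟪w, v a - v b⟫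
      = (R a * Real.sin (Θ a) - R b * Real.sin (Θ b)) * d2 := by
    intro a b
    have hab : v a - v b = R a • e (Θ a) - R b • e (Θ b) := by
      rw [hvm, hvm]; abel
    rw [hab, inner_sub_right, real_inner_smul_right, real_inner_smul_right, inner_w_e,
      inner_w_e]
    ring
  refine ⟨v, ⟨?_, ?_, ?_⟩, ?_⟩
  · -- distinct vertices
    intro i hi j hj heq
    by_contra hij
    have hviq : ∀ m : ℕ, v m - q = R m • e (Θ m) := by
      intro m; rw [hvm]; exact add_sub_cancel_left _ _
    have hnormq : ∀ m : ℕ, ‖v m - q‖ = R m * d := by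
      intro m
      rw [hviq, norm_smul, norm_e, Real.norm_eq_abs, abs_of_pos (hRpos m)]
    have hRR : R i = R j := by
      have h : ‖v i - q‖ = ‖v j - q‖ := by rw [heq]
      rw [hnormq, hnormq] at h
      exact mul_right_cancel₀ hdpos.ne' h
    have hpar : i % 2 = j % 2 := by
      rcases Nat.mod_two_eq_zero_or_one i with hi2 | hi2 <;>
        rcases Nat.mod_two_eq_zero_or_one j with hj2 | hj2
      · rw [hi2, hj2]
      · exfalso; rw [hReven i hi2, hRodd j hj2] at hRR; linarith
      · exfalso; rw [hRodd i hi2, hReven j hj2] at hRR; linarith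
      · rw [hi2, hj2]
    have hcos : Real.cos (Θ i) = Real.cos (Θ j) := by
      have h : ⟪u, v i - q⟫ = ⟪u, v j - q⟫ := by rw [heq]
      rw [hviq, hviq, real_inner_smul_right, real_inner_smul_right, inner_u_e, inner_u_e,
        hRR] at h
      have h2 := mul_left_cancel₀ (hRpos j).ne' h
      exact mul_right_cancel₀ hd2pos.ne' h2
    have hkm1 : 0 ≤ ((k:ℝ) - 1) * σ := by
      apply mul_nonneg _ hσpos.le; linarith
    have hkm2 : ((k:ℝ) - 1) * σ ≤ 1 := by
      have : ((k:ℝ) - 1) * σ ≤ 2 * (k:ℝ) * σ := by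
        apply mul_le_mul_of_nonneg_right _ hσpos.le; linarith
      linarith
    have hwin01 : ∀ m : ℕ, m < 2 * k → 0 ≤ (m:ℝ) * σ ∧ (m:ℝ) * σ ≤ 1 := by
      intro m hm
      constructor
      · exact mul_nonneg (Nat.cast_nonneg m) hσpos.le
      · have h1 : (m:ℝ) * σ ≤ 2 * (k:ℝ) * σ :=
          mul_le_mul_of_nonneg_right (hwinR m hm) hσpos.le
        linarith
    by_cases hi' : i = 2 * k - 1 <;> by_cases hj' : j = 2 * k - 1
    · exact hij (hi'.trans hj'.symm)
    · rw [hi', hΘlast, hψ, hΘwin j hj'] at hcos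
      obtain ⟨hb1, hb2⟩ := hwin01 j hj
      have h1 := cos_shift_neg hkm1 hkm2
      have h2 := cos_pos_small hb1 hb2
      linarith [hcos ▸ h1]
    · rw [hj', hΘlast, hψ, hΘwin i hi'] at hcos
      obtain ⟨hb1, hb2⟩ := hwin01 i hi
      have h1 := cos_shift_neg hkm1 hkm2
      have h2 := cos_pos_small hb1 hb2
      linarith [hcos ▸ h2]
    · rw [hΘwin i hi', hΘwin j hj'] at hcos
      have hπ : (3:ℝ) < π := Real.pi_gt_three
      obtain ⟨ha1, ha2⟩ := hwin01 i hi
      obtain ⟨hb1, hb2⟩ := hwin01 j hj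
      have hinj : (i:ℝ) * σ = (j:ℝ) * σ :=
        Real.strictAntiOn_cos.injOn ⟨ha1, by linarith⟩ ⟨hb1, by linarith⟩ hcos
      have : (i:ℝ) = (j:ℝ) := mul_right_cancel₀ hσpos.ne' hinj
      exact hij (by exact_mod_cast this)
  · -- nonadjacent edges disjoint
    have key2 : ∀ i j : ℕ, i < j → j < 2 * k → (i + 1) % (2 * k) ≠ j → (j + 1) % (2 * k) ≠ i →
        segment ℝ (v i) (v ((i + 1) % (2 * k))) ∩
          segment ℝ (v j) (v ((j + 1) % (2 * k))) = ∅ := by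
      intro i j hij hj hadj1 hadj2
      have hi1 : (i + 1) % (2 * k) = i + 1 := Nat.mod_eq_of_lt (by omega)
      rw [hi1] at hadj1 ⊢
      have hij2 : i + 2 ≤ j := by omega
      have hiR0 : (0:ℝ) ≤ (i:ℝ) := Nat.cast_nonneg i
      have hijR : (i:ℝ) + 2 ≤ (j:ℝ) := by exact_mod_cast hij2
      by_cases hjlast : j = 2 * k - 1
      · -- case B : last edge
        have hj1 : (j + 1) % (2 * k) = 0 := by
          rw [show j + 1 = 2 * k by omega]; exact Nat.mod_self _
        rw [hj1] at hadj2 ⊢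
        have hi0 : 1 ≤ i := by omega
        have hile : i ≤ 2 * k - 3 := by omega
        have hiR1 : (1:ℝ) ≤ (i:ℝ) := by exact_mod_cast hi0
        have hiR3 : (i:ℝ) ≤ 2 * (k:ℝ) - 3 := by
          have h1 : (i:ℝ) + 3 ≤ 2 * (k:ℝ) := by exact_mod_cast (by omega : i + 3 ≤ 2 * k)
          linarith
        obtain ⟨g1, g2, g3, g4⟩ := caseB (k:ℝ) σ (i:ℝ) hkR hσpos hσ1 hiR1 hiR3
        rw [Set.inter_comm, hvm i, hvm (i + 1), hvm j, hvm 0]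
        refine seg_disjoint_of_functional (F := S ((i:ℝ) * σ / 2))
          (hRpos j) (hRpos 0) (hRpos i) (hRpos (i + 1)) ?_ ?_ ?_ ?_
        · rw [inner_S_e, hjlast, hΘlast, hψ]
          exact mul_nonpos_iff.mpr (Or.inr ⟨g1, hd2pos.le⟩)
        · rw [inner_S_e, hΘwin 0 (by omega)]
          rw [show ((0:ℕ):ℝ) * σ = 0 by norm_num]
          exact mul_nonpos_iff.mpr (Or.inr ⟨g2, hd2pos.le⟩)
        · rw [inner_S_e, hΘwin i (by omega)]
          exact mul_pos g3 hd2pos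
        · rw [inner_S_e, hΘwin (i + 1) (by omega)]
          rw [show (((i + 1 : ℕ)):ℝ) = (i:ℝ) + 1 by push_cast; ring]
          exact mul_pos g4 hd2pos
      · -- case A
        have hjle : j ≤ 2 * k - 2 := by omega
        have hj1 : (j + 1) % (2 * k) = j + 1 := Nat.mod_eq_of_lt (by omega)
        rw [hj1]
        have hjR : (j:ℝ) ≤ 2 * (k:ℝ) - 1 := by
          have h1 : (j:ℝ) + 1 ≤ 2 * (k:ℝ) := by exact_mod_cast (by omega : j + 1 ≤ 2 * k)
          linarith
        rw [hvm i, hvm (i + 1), hvm j, hvm (j + 1)]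
        by_cases hjl2 : j + 1 = 2 * k - 1
        · have hjR2 : (j:ℝ) = 2 * (k:ℝ) - 2 := by
            have h1 : j + 2 = 2 * k := by omega
            have h2 : (j:ℝ) + 2 = 2 * (k:ℝ) := by exact_mod_cast h1
            linarith
          obtain ⟨g1, g2, g3, g4⟩ := caseA2 (k:ℝ) σ (i:ℝ) (j:ℝ) hkR hσpos hσ1 hiR0 hijR hjR2
          refine seg_disjoint_of_functional (F := S (((i:ℝ) + 1 + (j:ℝ)) * σ / 2))
            (hRpos i) (hRpos (i + 1)) (hRpos j) (hRpos (j + 1)) ?_ ?_ ?_ ?_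
          · rw [inner_S_e, hΘwin i (by omega)]
            exact mul_nonpos_iff.mpr (Or.inr ⟨g1, hd2pos.le⟩)
          · rw [inner_S_e, hΘwin (i + 1) (by omega)]
            rw [show (((i + 1 : ℕ)):ℝ) = (i:ℝ) + 1 by push_cast; ring]
            exact mul_nonpos_iff.mpr (Or.inr ⟨g2, hd2pos.le⟩)
          · rw [inner_S_e, hΘwin j (by omega)]
            exact mul_pos g3 hd2pos
          · rw [inner_S_e, hjl2, hΘlast, hψ]
            exact mul_pos g4 hd2pos
        · obtain ⟨g1, g2, g3, g4⟩ := caseA1 (k:ℝ) σ (i:ℝ) (j:ℝ) hkR hσpos hσ1 hiR0 hijR hjR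
          refine seg_disjoint_of_functional (F := S (((i:ℝ) + 1 + (j:ℝ)) * σ / 2))
            (hRpos i) (hRpos (i + 1)) (hRpos j) (hRpos (j + 1)) ?_ ?_ ?_ ?_
          · rw [inner_S_e, hΘwin i (by omega)]
            exact mul_nonpos_iff.mpr (Or.inr ⟨g1, hd2pos.le⟩)
          · rw [inner_S_e, hΘwin (i + 1) (by omega)]
            rw [show (((i + 1 : ℕ)):ℝ) = (i:ℝ) + 1 by push_cast; ring]
            exact mul_nonpos_iff.mpr (Or.inr ⟨g2, hd2pos.le⟩)
          · rw [inner_S_e, hΘwin j (by omega)]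
            exact mul_pos g3 hd2pos
          · rw [inner_S_e, hΘwin (j + 1) hjl2]
            rw [show (((j + 1 : ℕ)):ℝ) = (j:ℝ) + 1 by push_cast; ring]
            exact mul_pos g4 hd2pos
    intro i hi j hj hne hadj1 hadj2
    rcases lt_or_gt_of_ne hne with h | h
    · exact key2 i j h hj hadj1 hadj2
    · rw [Set.inter_comm]
      exact key2 j i h hi hadj2 hadj1
  · -- adjacent edges meet exactly at shared vertex
    intro i hi
    rcases (by omega : i + 2 ≤ 2 * k - 2 ∨ i = 2 * k - 3 ∨ i = 2 * k - 2 ∨ i = 2 * k - 1)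
      with hc | hc | hc | hc
    · -- W1: all three in window
      rw [Nat.mod_eq_of_lt (by omega : i + 1 < 2 * k), Nat.mod_eq_of_lt (by omega : i + 2 < 2 * k)]
      apply wedge_inter u w
      rw [hdiff_u, hdiff_u, hdiff_w, hdiff_w,
        hΘwin i (by omega), hΘwin (i + 1) (by omega), hΘwin (i + 2) (by omega),
        show (((i + 1 : ℕ)):ℝ) * σ = (i:ℝ) * σ + σ by push_cast; ring,
        show (((i + 2 : ℕ)):ℝ) * σ = (i:ℝ) * σ + 2 * σ by push_cast; ring,
        show R (i + 2) = R i by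
          simp only [hR]; rw [show (i + 2) % 2 = i % 2 by omega]]
      apply det_scale hd2pos.ne'
      apply detW1 σ ((i:ℝ) * σ) ρ (R i) (R (i + 1)) hσpos hσq hcoshalf hρpos hρhalf
      rcases Nat.mod_two_eq_zero_or_one i with hp | hp
      · exact Or.inl ⟨hReven i hp, hRodd (i + 1) (by omega)⟩
      · exact Or.inr ⟨hRodd i hp, hReven (i + 1) (by omega)⟩
    · -- W2 : i = 2k-3
      subst hc
      rw [show (2 * k - 3 + 1) % (2 * k) = 2 * k - 2 by
          rw [show 2 * k - 3 + 1 = 2 * k - 2 by omega]; exact Nat.mod_eq_of_lt (by omega),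
        show (2 * k - 3 + 2) % (2 * k) = 2 * k - 1 by
          rw [show 2 * k - 3 + 2 = 2 * k - 1 by omega]; exact Nat.mod_eq_of_lt (by omega)]
      apply wedge_inter u w
      rw [hdiff_u, hdiff_u, hdiff_w, hdiff_w,
        hΘwin (2 * k - 3) (by omega), hΘwin (2 * k - 2) (by omega), hΘlast, hψ,
        hRodd (2 * k - 3) (by omega), hReven (2 * k - 2) (by omega),
        hRodd (2 * k - 1) (by omega),
        show (((2 * k - 3 : ℕ)):ℝ) = 2 * (k:ℝ) - 3 by
          rw [Nat.cast_sub (by omega)]; push_cast; ring,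
        show (((2 * k - 2 : ℕ)):ℝ) = 2 * (k:ℝ) - 2 by
          rw [Nat.cast_sub (by omega)]; push_cast; ring]
      apply det_scale hd2pos.ne'
      exact detW2 (k:ℝ) σ ρ hkR hσpos hσ1 hρpos hρhalf
    · -- W3 : i = 2k-2
      subst hc
      rw [show (2 * k - 2 + 1) % (2 * k) = 2 * k - 1 by
          rw [show 2 * k - 2 + 1 = 2 * k - 1 by omega]; exact Nat.mod_eq_of_lt (by omega),
        show (2 * k - 2 + 2) % (2 * k) = 0 by
          rw [show 2 * k - 2 + 2 = 2 * k by omega]; exact Nat.mod_self _]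
      apply wedge_inter u w
      rw [hdiff_u, hdiff_u, hdiff_w, hdiff_w,
        hΘwin (2 * k - 2) (by omega), hΘwin 0 (by omega), hΘlast, hψ,
        hReven (2 * k - 2) (by omega), hRodd (2 * k - 1) (by omega), hReven 0 (by omega),
        show (((2 * k - 2 : ℕ)):ℝ) = 2 * (k:ℝ) - 2 by
          rw [Nat.cast_sub (by omega)]; push_cast; ring,
        show ((0:ℕ):ℝ) * σ = 0 by norm_num]
      apply det_scale hd2pos.ne'
      exact detW3 (k:ℝ) σ ρ hkR hσpos hσ1 hρpos hρhalf
    · -- W4 : i = 2k-1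
      subst hc
      rw [show (2 * k - 1 + 1) % (2 * k) = 0 by
          rw [show 2 * k - 1 + 1 = 2 * k by omega]; exact Nat.mod_self _,
        show (2 * k - 1 + 2) % (2 * k) = 1 by
          rw [show 2 * k - 1 + 2 = 2 * k + 1 by omega, Nat.add_mod_left]
          exact Nat.mod_eq_of_lt (by omega)]
      apply wedge_inter u w
      rw [hdiff_u, hdiff_u, hdiff_w, hdiff_w,
        hΘwin 0 (by omega), hΘwin 1 (by omega), hΘlast, hψ,
        hRodd (2 * k - 1) (by omega), hReven 0 (by omega), hRodd 1 (by omega),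
        show ((0:ℕ):ℝ) * σ = 0 by norm_num,
        show ((1:ℕ):ℝ) * σ = σ by norm_num]
      apply det_scale hd2pos.ne'
      exact detW4 (k:ℝ) σ ρ hkR hσpos hσ1 hρpos hρhalf
  · -- distances
    intro i hi
    constructor
    · intro hpar
      have hine : i ≠ 2 * k - 1 := by omega
      have he0 : e 0 = u := by simp [he]
      have hrw : v i - p = e ((i:ℝ) * σ) - e 0 := by
        rw [hvm, hΘwin i hine, hReven i hpar, one_smul, he0, hu]
        abel
      rw [hrw]
      calc ‖e ((i:ℝ) * σ) - e 0‖ ≤ 2 * d * |(i:ℝ) * σ - 0| := norm_e_sub _ _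
      _ = 2 * d * ((i:ℝ) * σ) := by
          rw [sub_zero, abs_of_nonneg (mul_nonneg (Nat.cast_nonneg i) hσpos.le)]
      _ < ε := dist_even_bound d (k:ℝ) (i:ℝ) σ ε hdpos (Nat.cast_nonneg i)
          (hwinR i hi) hσpos hσε hε
    · intro hpar
      have hrw : v i - q = ρ • e (Θ i) := by
        rw [hvm, hRodd i hpar]
        exact add_sub_cancel_left _ _
      rw [hrw, norm_smul, norm_e, Real.norm_eq_abs, abs_of_pos hρpos]
      calc ρ * d ≤ ε / 2 := hρd
      _ < ε := by linarith
end

section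
/- Let s₁, s₂ be points on the open upper unit semicircle and t₁, t₂ points on the open lower unit semicircle, all four distinct. Write x(p) for the first coordinate. Then the closed segments [s₁, t₁] and [s₂, t₂] intersect in a point that is not a common endpoint if and only if (x(s₁) < x(s₂) and x(t₁) > x(t₂)) or (x(s₂) < x(s₁) and x(t₂) > x(t₁)), assuming x(s₁) ≠ x(s₂) and x(t₁) ≠ x(t₂). -/
/-- Signed cross product of `b - a` and `c - a`. -/
def crs (a b c : ℝ × ℝ) : ℝ := (b.1 - a.1) * (c.2 - a.2) - (b.2 - a.2) * (c.1 - a.1)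

lemma crs_self_left (a b : ℝ × ℝ) : crs a b a = 0 := by unfold crs; ring

lemma crs_self_right (a b : ℝ × ℝ) : crs a b b = 0 := by unfold crs; ring

lemma crs_affine (a b p q : ℝ × ℝ) (θ : ℝ) :
    crs a b ((1 - θ) • p + θ • q) = (1 - θ) * crs a b p + θ * crs a b q := by
  unfold crs
  simp only [Prod.fst_add, Prod.snd_add, Prod.smul_fst, Prod.smul_snd, smul_eq_mul]
  ring

lemma mem_segment_iff (a b x : ℝ × ℝ) :
    x ∈ segment ℝ a b ↔ ∃ θ : ℝ, 0 ≤ θ ∧ θ ≤ 1 ∧ x = (1 - θ) • a + θ • b := by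
  rw [segment_eq_image]
  constructor
  · rintro ⟨θ, hθ, rfl⟩
    exact ⟨θ, hθ.1, hθ.2, rfl⟩
  · rintro ⟨θ, h0, h1, rfl⟩
    exact ⟨θ, ⟨h0, h1⟩, rfl⟩

/-- If each segment's endpoints lie strictly on opposite sides of the other's line,
the segments cross in a point that is not an endpoint of the second segment. -/
lemma crossing (s₁ t₁ s₂ t₂ : ℝ × ℝ)
    (h1 : crs s₁ t₁ s₂ * crs s₁ t₁ t₂ < 0)
    (h2 : crs s₂ t₂ s₁ * crs s₂ t₂ t₁ < 0) :
    ∃ x, x ∈ segment ℝ s₁ t₁ ∧ x ∈ segment ℝ s₂ t₂ ∧ x ≠ s₂ ∧ x ≠ t₂ := by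
  set fs := crs s₁ t₁ s₂ with hfs
  set ft := crs s₁ t₁ t₂ with hft
  set gs := crs s₂ t₂ s₁ with hgs
  set gt := crs s₂ t₂ t₁ with hgt
  set D := ft - fs with hDdef
  have hD : D ≠ 0 := by
    intro h
    have hfe : ft = fs := by simpa [hDdef, sub_eq_zero] using h
    rw [hfe] at h1
    nlinarith [sq_nonneg fs]
  have hD2 : 0 < D ^ 2 := by positivity
  have hgd : gs - gt = D := by
    simp only [hgs, hgt, hDdef, hfs, hft]; unfold crs; ring
  set θ := gs / D with hθdef
  set φ := -fs / D with hφdef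
  have hθD : θ * D ^ 2 = gs * D := by
    field_simp [hθdef]; rw [hθdef]; exact div_mul_cancel₀ gs hD
  have hφD : φ * D ^ 2 = -fs * D := by
    field_simp [hφdef]; rw [hφdef]; exact div_mul_cancel₀ (-fs) hD
  have hgsD : gs * D = gs ^ 2 - gs * gt := by rw [← hgd]; ring
  have hgtD : gt * D = gs * gt - gt ^ 2 := by rw [← hgd]; ring
  have hfsD : fs * D = fs * ft - fs ^ 2 := by rw [hDdef]; ring
  have hftD : ft * D = ft ^ 2 - fs * ft := by rw [hDdef]; ring
  have hDg : D ^ 2 = gs * D - gt * D := by rw [← hgd]; ring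
  have hDf : D ^ 2 = ft * D - fs * D := by rw [hDdef]; ring
  have hθ0 : 0 < θ := by nlinarith [hθD, hD2, hgsD, h2, sq_nonneg gs]
  have hθ1 : θ < 1 := by nlinarith [hθD, hD2, hDg, hgtD, h2, sq_nonneg gt]
  have hφ0 : 0 < φ := by nlinarith [hφD, hD2, hfsD, h1, sq_nonneg fs]
  have hφ1 : φ < 1 := by nlinarith [hφD, hD2, hDf, hftD, h1, sq_nonneg ft]
  refine ⟨(1 - θ) • s₁ + θ • t₁, ?_, ?_, ?_, ?_⟩
  · exact (mem_segment_iff _ _ _).2 ⟨θ, le_of_lt hθ0, le_of_lt hθ1, rfl⟩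
  · have key1 : (D - gs) * s₁.1 + gs * t₁.1 = (D + fs) * s₂.1 - fs * t₂.1 := by
      simp only [hgs, hDdef, hfs, hft]; unfold crs; ring
    have key2 : (D - gs) * s₁.2 + gs * t₁.2 = (D + fs) * s₂.2 - fs * t₂.2 := by
      simp only [hgs, hDdef, hfs, hft]; unfold crs; ring
    refine (mem_segment_iff _ _ _).2 ⟨φ, le_of_lt hφ0, le_of_lt hφ1, ?_⟩
    have e1 : (1 - θ) * s₁.1 + θ * t₁.1 = (1 - φ) * s₂.1 + φ * t₂.1 := by
      rw [hθdef, hφdef]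
      field_simp
      linear_combination key1
    have e2 : (1 - θ) * s₁.2 + θ * t₁.2 = (1 - φ) * s₂.2 + φ * t₂.2 := by
      rw [hθdef, hφdef]
      field_simp
      linear_combination key2
    apply Prod.ext <;>
      simp only [Prod.fst_add, Prod.snd_add, Prod.smul_fst, Prod.smul_snd, smul_eq_mul]
    · exact e1
    · exact e2
  · intro h
    have h0 : crs s₁ t₁ ((1 - θ) • s₁ + θ • t₁) = 0 := by
      rw [crs_affine, crs_self_left, crs_self_right]; ring
    rw [h] at h0
    rw [← hfs] at h0
    rw [h0] at h1
    simp at h1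
  · intro h
    have h0 : crs s₁ t₁ ((1 - θ) • s₁ + θ • t₁) = 0 := by
      rw [crs_affine, crs_self_left, crs_self_right]; ring
    rw [h] at h0
    rw [← hft] at h0
    rw [h0] at h1
    simp at h1

/-- If both endpoints of the second segment lie strictly on the same side of the
first segment's line, the segments are disjoint. -/
lemma separated (s₁ t₁ s₂ t₂ : ℝ × ℝ)
    (h : 0 < crs s₁ t₁ s₂ * crs s₁ t₁ t₂) :
    ∀ x, x ∈ segment ℝ s₁ t₁ → x ∉ segment ℝ s₂ t₂ := by
  intro x hx1 hx2
  obtain ⟨θ, hθ0, hθ1, rfl⟩ := (mem_segment_iff _ _ _).1 hx1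
  obtain ⟨φ, hφ0, hφ1, hEq⟩ := (mem_segment_iff _ _ _).1 hx2
  have e1 : crs s₁ t₁ ((1 - θ) • s₁ + θ • t₁) = 0 := by
    rw [crs_affine, crs_self_left, crs_self_right]; ring
  have e2 : crs s₁ t₁ ((1 - φ) • s₂ + φ • t₂)
      = (1 - φ) * crs s₁ t₁ s₂ + φ * crs s₁ t₁ t₂ := crs_affine _ _ _ _ _
  rw [← hEq, e1] at e2
  rcases mul_pos_iff.mp h with ⟨ha, hb⟩ | ⟨ha, hb⟩ <;>
    rcases eq_or_lt_of_le hφ0 with h0 | h0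
  · rw [← h0] at e2; linarith
  · have p1 := mul_pos h0 hb
    have p2 := mul_nonneg (show (0:ℝ) ≤ 1 - φ by linarith) ha.le
    nlinarith
  · rw [← h0] at e2; linarith
  · have p1 := mul_neg_of_pos_of_neg h0 hb
    have p2 := mul_nonpos_of_nonneg_of_nonpos (show (0:ℝ) ≤ 1 - φ by linarith) ha.le
    nlinarith

/-- Tangent half-angle parametrization of circle points with `y ≠ 0`. -/
lemma param (x y : ℝ) (h : x ^ 2 + y ^ 2 = 1) (hy : y ≠ 0) :
    0 < 1 + x ∧ x * (1 + (y / (1 + x)) ^ 2) = 1 - (y / (1 + x)) ^ 2 ∧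
      y * (1 + (y / (1 + x)) ^ 2) = 2 * (y / (1 + x)) := by
  have hy2 : 0 < y ^ 2 := by positivity
  have hx : 0 < 1 + x := by
    rcases le_or_gt x (-1) with hle | hlt
    · exfalso
      nlinarith [mul_nonneg (by linarith : (0:ℝ) ≤ -1 - x) (by linarith : (0:ℝ) ≤ 1 - x)]
    · linarith
  have hxne : (1 : ℝ) + x ≠ 0 := ne_of_gt hx
  refine ⟨hx, ?_, ?_⟩
  · field_simp
    linear_combination (x + 1) * h
  · field_simp
    linear_combination h

/-- The key cross-product identity in tangent half-angle parameters. -/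
lemma crId (a1 a2 b1 b2 c1 c2 u v w : ℝ)
    (ha1 : a1 * (1 + u ^ 2) = 1 - u ^ 2) (ha2 : a2 * (1 + u ^ 2) = 2 * u)
    (hb1 : b1 * (1 + v ^ 2) = 1 - v ^ 2) (hb2 : b2 * (1 + v ^ 2) = 2 * v)
    (hc1 : c1 * (1 + w ^ 2) = 1 - w ^ 2) (hc2 : c2 * (1 + w ^ 2) = 2 * w) :
    ((b1 - a1) * (c2 - a2) - (b2 - a2) * (c1 - a1)) *
        ((1 + u ^ 2) * ((1 + v ^ 2) * (1 + w ^ 2)))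
      = 4 * ((u - v) * ((v - w) * (w - u))) := by
  have hu : (0:ℝ) < 1 + u ^ 2 := by positivity
  have hv : (0:ℝ) < 1 + v ^ 2 := by positivity
  have hw : (0:ℝ) < 1 + w ^ 2 := by positivity
  have ea1 : a1 = (1 - u ^ 2) / (1 + u ^ 2) := by rw [eq_div_iff (ne_of_gt hu)]; exact ha1
  have ea2 : a2 = 2 * u / (1 + u ^ 2) := by rw [eq_div_iff (ne_of_gt hu)]; exact ha2
  have eb1 : b1 = (1 - v ^ 2) / (1 + v ^ 2) := by rw [eq_div_iff (ne_of_gt hv)]; exact hb1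
  have eb2 : b2 = 2 * v / (1 + v ^ 2) := by rw [eq_div_iff (ne_of_gt hv)]; exact hb2
  have ec1 : c1 = (1 - w ^ 2) / (1 + w ^ 2) := by rw [eq_div_iff (ne_of_gt hw)]; exact hc1
  have ec2 : c2 = 2 * w / (1 + w ^ 2) := by rw [eq_div_iff (ne_of_gt hw)]; exact hc2
  subst ea1 ea2 eb1 eb2 ec1 ec2
  field_simp
  ring

/-- `x` is antitone in the square of the half-angle parameter. -/
lemma xlt (a b u v : ℝ) (ha : a * (1 + u ^ 2) = 1 - u ^ 2)
    (hb : b * (1 + v ^ 2) = 1 - v ^ 2) (h : u ^ 2 < v ^ 2) : b < a := by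
  have key : (a - b) * ((1 + u ^ 2) * (1 + v ^ 2)) = 2 * (v ^ 2 - u ^ 2) := by
    linear_combination (1 + v ^ 2) * ha - (1 + u ^ 2) * hb
  nlinarith [key, sq_nonneg u, sq_nonneg v, sq_nonneg (u * v)]

lemma pos_of_eq (a P Q : ℝ) (hP : 0 < P) (h : a * P = Q) (hQ : 0 < Q) : 0 < a := by
  nlinarith

lemma neg_of_eq (a P Q : ℝ) (hP : 0 < P) (h : a * P = Q) (hQ : Q < 0) : a < 0 := by
  nlinarith

set_option maxHeartbeats 2000000 in
/-- Chords of the unit circle with one endpoint on the open upper semicircle and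
one on the open lower semicircle cross (in a point that is not a common
endpoint) iff their endpoint orders by `x`-coordinate are inverted. -/
theorem chords_cross_iff_inverted
    (s₁ s₂ t₁ t₂ : ℝ × ℝ)
    (hs₁ : s₁.1 ^ 2 + s₁.2 ^ 2 = 1) (hs₁' : 0 < s₁.2)
    (hs₂ : s₂.1 ^ 2 + s₂.2 ^ 2 = 1) (hs₂' : 0 < s₂.2)
    (ht₁ : t₁.1 ^ 2 + t₁.2 ^ 2 = 1) (ht₁' : t₁.2 < 0)
    (ht₂ : t₂.1 ^ 2 + t₂.2 ^ 2 = 1) (ht₂' : t₂.2 < 0)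
    (hsx : s₁.1 ≠ s₂.1) (htx : t₁.1 ≠ t₂.1) :
    (∃ x, x ∈ segment ℝ s₁ t₁ ∧ x ∈ segment ℝ s₂ t₂ ∧
        ¬ ((x = s₁ ∨ x = t₁) ∧ (x = s₂ ∨ x = t₂))) ↔
      ((s₁.1 < s₂.1 ∧ t₂.1 < t₁.1) ∨ (s₂.1 < s₁.1 ∧ t₁.1 < t₂.1)) := by
  obtain ⟨hp1, e11, e12⟩ := param s₁.1 s₁.2 hs₁ (ne_of_gt hs₁')
  obtain ⟨hp2, e21, e22⟩ := param s₂.1 s₂.2 hs₂ (ne_of_gt hs₂')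
  obtain ⟨hq1, f11, f12⟩ := param t₁.1 t₁.2 ht₁ (ne_of_lt ht₁')
  obtain ⟨hq2, f21, f22⟩ := param t₂.1 t₂.2 ht₂ (ne_of_lt ht₂')
  set σ₁ := s₁.2 / (1 + s₁.1) with hσ₁
  set σ₂ := s₂.2 / (1 + s₂.1) with hσ₂
  set τ₁ := t₁.2 / (1 + t₁.1) with hτ₁
  set τ₂ := t₂.2 / (1 + t₂.1) with hτ₂
  have hσ₁0 : 0 < σ₁ := div_pos hs₁' hp1
  have hσ₂0 : 0 < σ₂ := div_pos hs₂' hp2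
  have hτ₁0 : τ₁ < 0 := div_neg_of_neg_of_pos ht₁' hq1
  have hτ₂0 : τ₂ < 0 := div_neg_of_neg_of_pos ht₂' hq2
  -- products of (1 + u²) factors
  have P1pos : (0:ℝ) < (1 + σ₁ ^ 2) * ((1 + τ₁ ^ 2) * (1 + σ₂ ^ 2)) := by positivity
  have P2pos : (0:ℝ) < (1 + σ₁ ^ 2) * ((1 + τ₁ ^ 2) * (1 + τ₂ ^ 2)) := by positivity
  have P3pos : (0:ℝ) < (1 + σ₂ ^ 2) * ((1 + τ₂ ^ 2) * (1 + σ₁ ^ 2)) := by positivity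
  have P4pos : (0:ℝ) < (1 + σ₂ ^ 2) * ((1 + τ₂ ^ 2) * (1 + τ₁ ^ 2)) := by positivity
  have E1 : crs s₁ t₁ s₂ * ((1 + σ₁ ^ 2) * ((1 + τ₁ ^ 2) * (1 + σ₂ ^ 2)))
      = 4 * ((σ₁ - τ₁) * ((τ₁ - σ₂) * (σ₂ - σ₁))) :=
    crId s₁.1 s₁.2 t₁.1 t₁.2 s₂.1 s₂.2 σ₁ τ₁ σ₂ e11 e12 f11 f12 e21 e22
  have E2 : crs s₁ t₁ t₂ * ((1 + σ₁ ^ 2) * ((1 + τ₁ ^ 2) * (1 + τ₂ ^ 2)))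
      = 4 * ((σ₁ - τ₁) * ((τ₁ - τ₂) * (τ₂ - σ₁))) :=
    crId s₁.1 s₁.2 t₁.1 t₁.2 t₂.1 t₂.2 σ₁ τ₁ τ₂ e11 e12 f11 f12 f21 f22
  have E3 : crs s₂ t₂ s₁ * ((1 + σ₂ ^ 2) * ((1 + τ₂ ^ 2) * (1 + σ₁ ^ 2)))
      = 4 * ((σ₂ - τ₂) * ((τ₂ - σ₁) * (σ₁ - σ₂))) :=
    crId s₂.1 s₂.2 t₂.1 t₂.2 s₁.1 s₁.2 σ₂ τ₂ σ₁ e21 e22 f21 f22 e11 e12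
  have E4 : crs s₂ t₂ t₁ * ((1 + σ₂ ^ 2) * ((1 + τ₂ ^ 2) * (1 + τ₁ ^ 2)))
      = 4 * ((σ₂ - τ₂) * ((τ₂ - τ₁) * (τ₁ - σ₂))) :=
    crId s₂.1 s₂.2 t₂.1 t₂.2 t₁.1 t₁.2 σ₂ τ₂ τ₁ e21 e22 f21 f22 f11 f12
  have hσne : σ₁ ≠ σ₂ := by
    intro h
    apply hsx
    have h' : s₁.1 * (1 + σ₂ ^ 2) = s₂.1 * (1 + σ₂ ^ 2) := by
      rw [← h] at e21 ⊢
      rw [e11, e21]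
    exact mul_right_cancel₀ (by positivity) h'
  have hτne : τ₁ ≠ τ₂ := by
    intro h
    apply htx
    have h' : t₁.1 * (1 + τ₂ ^ 2) = t₂.1 * (1 + τ₂ ^ 2) := by
      rw [← h] at f21 ⊢
      rw [f11, f21]
    exact mul_right_cancel₀ (by positivity) h'
  rcases lt_or_gt_of_ne hσne with hσ | hσ <;> rcases lt_or_gt_of_ne hτne with hτ | hτ
  · -- σ₁ < σ₂, τ₁ < τ₂ : same order (s₂.1 < s₁.1 and t₁.1 < t₂.1) ⇒ cross
    have hx1 : s₂.1 < s₁.1 := xlt s₁.1 s₂.1 σ₁ σ₂ e11 e21 (pow_lt_pow_left₀ hσ hσ₁0.le two_ne_zero)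
    have hx2 : t₁.1 < t₂.1 := xlt t₂.1 t₁.1 τ₂ τ₁ f21 f11 (by
      simpa [neg_sq] using pow_lt_pow_left₀ (show -τ₂ < -τ₁ by linarith)
        (show (0:ℝ) ≤ -τ₂ by linarith) two_ne_zero)
    refine iff_of_true ?_ (Or.inr ⟨hx1, hx2⟩)
    have c1 : crs s₁ t₁ s₂ < 0 := by
      refine neg_of_eq _ _ _ P1pos E1 ?_
      linarith [mul_neg_of_pos_of_neg (show (0:ℝ) < σ₁ - τ₁ by linarith)
        (mul_neg_of_neg_of_pos (show τ₁ - σ₂ < 0 by linarith) (show (0:ℝ) < σ₂ - σ₁ by linarith))]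
    have c2 : 0 < crs s₁ t₁ t₂ := by
      refine pos_of_eq _ _ _ P2pos E2 ?_
      linarith [mul_pos (show (0:ℝ) < σ₁ - τ₁ by linarith)
        (mul_pos_of_neg_of_neg (show τ₁ - τ₂ < 0 by linarith) (show τ₂ - σ₁ < 0 by linarith))]
    have c3 : 0 < crs s₂ t₂ s₁ := by
      refine pos_of_eq _ _ _ P3pos E3 ?_
      linarith [mul_pos (show (0:ℝ) < σ₂ - τ₂ by linarith)
        (mul_pos_of_neg_of_neg (show τ₂ - σ₁ < 0 by linarith) (show σ₁ - σ₂ < 0 by linarith))]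
    have c4 : crs s₂ t₂ t₁ < 0 := by
      refine neg_of_eq _ _ _ P4pos E4 ?_
      linarith [mul_neg_of_pos_of_neg (show (0:ℝ) < σ₂ - τ₂ by linarith)
        (mul_neg_of_pos_of_neg (show (0:ℝ) < τ₂ - τ₁ by linarith) (show τ₁ - σ₂ < 0 by linarith))]
    obtain ⟨x, hx1', hx2', hne1, hne2⟩ :=
      crossing s₁ t₁ s₂ t₂ (mul_neg_of_neg_of_pos c1 c2) (mul_neg_of_pos_of_neg c3 c4)
    exact ⟨x, hx1', hx2', fun ⟨_, h⟩ => h.elim hne1 hne2⟩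
  · -- σ₁ < σ₂, τ₂ < τ₁ : s₂.1 < s₁.1 and t₂.1 < t₁.1 : separated
    have hx1 : s₂.1 < s₁.1 := xlt s₁.1 s₂.1 σ₁ σ₂ e11 e21 (pow_lt_pow_left₀ hσ hσ₁0.le two_ne_zero)
    have hx2 : t₂.1 < t₁.1 := xlt t₁.1 t₂.1 τ₁ τ₂ f11 f21 (by
      simpa [neg_sq] using pow_lt_pow_left₀ (show -τ₁ < -τ₂ by linarith)
        (show (0:ℝ) ≤ -τ₁ by linarith) two_ne_zero)
    refine iff_of_false ?_ ?_
    · rintro ⟨x, hxa, hxb, -⟩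
      have c1 : crs s₁ t₁ s₂ < 0 := by
        refine neg_of_eq _ _ _ P1pos E1 ?_
        linarith [mul_neg_of_pos_of_neg (show (0:ℝ) < σ₁ - τ₁ by linarith)
          (mul_neg_of_neg_of_pos (show τ₁ - σ₂ < 0 by linarith) (show (0:ℝ) < σ₂ - σ₁ by linarith))]
      have c2 : crs s₁ t₁ t₂ < 0 := by
        refine neg_of_eq _ _ _ P2pos E2 ?_
        linarith [mul_neg_of_pos_of_neg (show (0:ℝ) < σ₁ - τ₁ by linarith)
          (mul_neg_of_pos_of_neg (show (0:ℝ) < τ₁ - τ₂ by linarith) (show τ₂ - σ₁ < 0 by linarith))]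
      exact separated s₁ t₁ s₂ t₂ (mul_pos_of_neg_of_neg c1 c2) x hxa hxb
    · rintro (⟨h, -⟩ | ⟨-, h⟩) <;> linarith
  · -- σ₂ < σ₁, τ₁ < τ₂ : s₁.1 < s₂.1 and t₁.1 < t₂.1 : separated
    have hx1 : s₁.1 < s₂.1 := xlt s₂.1 s₁.1 σ₂ σ₁ e21 e11 (pow_lt_pow_left₀ hσ hσ₂0.le two_ne_zero)
    have hx2 : t₁.1 < t₂.1 := xlt t₂.1 t₁.1 τ₂ τ₁ f21 f11 (by
      simpa [neg_sq] using pow_lt_pow_left₀ (show -τ₂ < -τ₁ by linarith)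
        (show (0:ℝ) ≤ -τ₂ by linarith) two_ne_zero)
    refine iff_of_false ?_ ?_
    · rintro ⟨x, hxa, hxb, -⟩
      have c1 : 0 < crs s₁ t₁ s₂ := by
        refine pos_of_eq _ _ _ P1pos E1 ?_
        linarith [mul_pos (show (0:ℝ) < σ₁ - τ₁ by linarith)
          (mul_pos_of_neg_of_neg (show τ₁ - σ₂ < 0 by linarith) (show σ₂ - σ₁ < 0 by linarith))]
      have c2 : 0 < crs s₁ t₁ t₂ := by
        refine pos_of_eq _ _ _ P2pos E2 ?_
        linarith [mul_pos (show (0:ℝ) < σ₁ - τ₁ by linarith)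
          (mul_pos_of_neg_of_neg (show τ₁ - τ₂ < 0 by linarith) (show τ₂ - σ₁ < 0 by linarith))]
      exact separated s₁ t₁ s₂ t₂ (mul_pos c1 c2) x hxa hxb
    · rintro (⟨-, h⟩ | ⟨h, -⟩) <;> linarith
  · -- σ₂ < σ₁, τ₂ < τ₁ : s₁.1 < s₂.1 and t₂.1 < t₁.1 : cross
    have hx1 : s₁.1 < s₂.1 := xlt s₂.1 s₁.1 σ₂ σ₁ e21 e11 (pow_lt_pow_left₀ hσ hσ₂0.le two_ne_zero)
    have hx2 : t₂.1 < t₁.1 := xlt t₁.1 t₂.1 τ₁ τ₂ f11 f21 (by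
      simpa [neg_sq] using pow_lt_pow_left₀ (show -τ₁ < -τ₂ by linarith)
        (show (0:ℝ) ≤ -τ₁ by linarith) two_ne_zero)
    refine iff_of_true ?_ (Or.inl ⟨hx1, hx2⟩)
    have c1 : 0 < crs s₁ t₁ s₂ := by
      refine pos_of_eq _ _ _ P1pos E1 ?_
      linarith [mul_pos (show (0:ℝ) < σ₁ - τ₁ by linarith)
        (mul_pos_of_neg_of_neg (show τ₁ - σ₂ < 0 by linarith) (show σ₂ - σ₁ < 0 by linarith))]
    have c2 : crs s₁ t₁ t₂ < 0 := by
      refine neg_of_eq _ _ _ P2pos E2 ?_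
      linarith [mul_neg_of_pos_of_neg (show (0:ℝ) < σ₁ - τ₁ by linarith)
        (mul_neg_of_pos_of_neg (show (0:ℝ) < τ₁ - τ₂ by linarith) (show τ₂ - σ₁ < 0 by linarith))]
    have c3 : crs s₂ t₂ s₁ < 0 := by
      refine neg_of_eq _ _ _ P3pos E3 ?_
      linarith [mul_neg_of_pos_of_neg (show (0:ℝ) < σ₂ - τ₂ by linarith)
        (mul_neg_of_neg_of_pos (show τ₂ - σ₁ < 0 by linarith) (show (0:ℝ) < σ₁ - σ₂ by linarith))]
    have c4 : 0 < crs s₂ t₂ t₁ := by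
      refine pos_of_eq _ _ _ P4pos E4 ?_
      linarith [mul_pos (show (0:ℝ) < σ₂ - τ₂ by linarith)
        (mul_pos_of_neg_of_neg (show τ₂ - τ₁ < 0 by linarith) (show τ₁ - σ₂ < 0 by linarith))]
    obtain ⟨x, hx1', hx2', hne1, hne2⟩ :=
      crossing s₁ t₁ s₂ t₂ (mul_neg_of_pos_of_neg c1 c2) (mul_neg_of_neg_of_pos c3 c4)
    exact ⟨x, hx1', hx2', fun ⟨_, h⟩ => h.elim hne1 hne2⟩
end
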